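/- (Reformulation of the ≪²-basis theorem via jump inversion.) Let θ(X, Y) be an arithmetical predicate of two sets. The following are equivalent: (i) for all sets X and Z with X' ≪ Z', there exists a set Y with Y ≤_T Z' such that θ(X, Y) holds and (X ⊕ Y)' ≪ Z'; (ii) for all sets A and C with A' ≪ C, there exists a set B such that θ(A, B) holds and (A ⊕ B)' ≪ C. -/

import Mathlib

/-!
Common computability-theoretic notions (relative to an oracle), formalized from scratch:
oracle machine codes, relative computability, Turing reducibility, the Turing jump,
the recursive join, binary trees, and the relation `A ≪ B` ("every infinite
`A`-computable binary tree has an infinite path computable from `B`").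
-/

namespace ArxivLL

/-- Oracle machine codes: `Nat.Partrec.Code` together with an `oracle` instruction. -/
inductive OCode : Type
  | zero : OCode
  | succ : OCode
  | left : OCode
  | right : OCode
  | oracle : OCode
  | pair : OCode → OCode → OCode
  | comp : OCode → OCode → OCode
  | prec : OCode → OCode → OCode
  | rfind' : OCode → OCode

/-- Evaluation of an oracle machine code relative to a (total) oracle `O : ℕ → ℕ`. -/
def evalo (O : ℕ → ℕ) : OCode → ℕ →. ℕ
  | .zero => pure 0
  | .succ => fun n => Part.some (n + 1)
  | .left => fun n => Part.some n.unpair.1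
  | .right => fun n => Part.some n.unpair.2
  | .oracle => fun n => Part.some (O n)
  | .pair cf cg => fun n => Nat.pair <$> evalo O cf n <*> evalo O cg n
  | .comp cf cg => fun n => evalo O cg n >>= evalo O cf
  | .prec cf cg =>
    Nat.unpaired fun a n =>
      n.rec (evalo O cf a) fun y IH => do
        let i ← IH
        evalo O cg (Nat.pair a (Nat.pair y i))
  | .rfind' cf =>
    Nat.unpaired fun a m =>
      (Nat.rfind fun n => (fun x => x = 0) <$> evalo O cf (Nat.pair a (n + m))).map (· + m)

/-- An (injective) numbering of oracle machine codes. -/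
def encodeOCode : OCode → ℕ
  | .zero => 0
  | .succ => 1
  | .left => 2
  | .right => 3
  | .oracle => 4
  | .pair cf cg => 4 * Nat.pair (encodeOCode cf) (encodeOCode cg) + 5
  | .comp cf cg => 4 * Nat.pair (encodeOCode cf) (encodeOCode cg) + 6
  | .prec cf cg => 4 * Nat.pair (encodeOCode cf) (encodeOCode cg) + 7
  | .rfind' cf => 4 * encodeOCode cf + 8

/-- `f : ℕ → ℕ` is (total) computable relative to the oracle `O`. -/
def RecFun (O : ℕ → ℕ) (f : ℕ → ℕ) : Prop :=
  ∃ c : OCode, ∀ n, evalo O c n = Part.some (f n)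

open Classical in
/-- The characteristic function of a set of natural numbers. -/
noncomputable def chi (A : Set ℕ) : ℕ → ℕ := fun n => if n ∈ A then 1 else 0

/-- Turing reducibility `A ≤_T B` for sets of natural numbers. -/
def TuringLE (A B : Set ℕ) : Prop := RecFun (chi B) (chi A)

/-- The recursive join `A ⊕ B = {2n : n ∈ A} ∪ {2n+1 : n ∈ B}`. -/
def join (A B : Set ℕ) : Set ℕ :=
  {n | (n % 2 = 0 ∧ n / 2 ∈ A) ∨ (n % 2 = 1 ∧ n / 2 ∈ B)}

/-- The Turing jump `A' = {⟨e, x⟩ : Φ_e^A(x)↓}`. -/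
def jump (A : Set ℕ) : Set ℕ :=
  {n | ∃ c : OCode, encodeOCode c = n.unpair.1 ∧ (evalo (chi A) c n.unpair.2).Dom}

/-- The iterated Turing jump `A^(n)`. -/
def jumpIter : ℕ → Set ℕ → Set ℕ
  | 0, A => A
  | n + 1, A => jump (jumpIter n A)

/-- A subtree of `2^{<ω}`: a set of finite binary strings closed under initial segments. -/
def IsBinTree (T : Set (List Bool)) : Prop :=
  ∀ s ∈ T, ∀ t : List Bool, t <+: s → t ∈ T

/-- The set of natural numbers coding the strings belonging to `T`. -/
def setOfStrings (T : Set (List Bool)) : Set ℕ :=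
  {n | ∃ s ∈ T, Encodable.encode s = n}

/-- `f : ℕ → Bool` is an infinite path through the tree `T`. -/
def IsPathOf (f : ℕ → Bool) (T : Set (List Bool)) : Prop :=
  ∀ n, (List.ofFn fun i : Fin n => f i) ∈ T

/-- The subset of `ℕ` determined by a `0`-`1` valued function. -/
def toSet (f : ℕ → Bool) : Set ℕ := {n | f n = true}

/-- `A ≪ B`: every infinite `A`-computable binary tree has an infinite path computable
from `B` (equivalently, `B` has PA degree relative to `A`). -/
def ll (A B : Set ℕ) : Prop :=
  ∀ T : Set (List Bool), IsBinTree T → T.Infinite → TuringLE (setOfStrings T) A →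
    ∃ f : ℕ → Bool, IsPathOf f T ∧ TuringLE (toSet f) B



-- ===================== AUX START =====================

open Nat.Partrec (Code)
open Nat.Partrec.Code (eval evaln)

/-- Decoding of `OCode` numbers. -/
def ofNatO : ℕ → OCode
  | 0 => .zero
  | 1 => .succ
  | 2 => .left
  | 3 => .right
  | 4 => .oracle
  | n + 5 =>
    let p := n / 4
    have h4 : p < n + 5 := lt_of_le_of_lt (Nat.div_le_self _ _) (by omega)
    have h1 : p.unpair.1 < n + 5 := lt_of_le_of_lt p.unpair_left_le h4
    have h2 : p.unpair.2 < n + 5 := lt_of_le_of_lt p.unpair_right_le h4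
    match n % 4 with
    | 0 => .pair (ofNatO p.unpair.1) (ofNatO p.unpair.2)
    | 1 => .comp (ofNatO p.unpair.1) (ofNatO p.unpair.2)
    | 2 => .prec (ofNatO p.unpair.1) (ofNatO p.unpair.2)
    | _ => .rfind' (ofNatO p)
decreasing_by all_goals (have := Nat.unpair_left_le (n / 4); have := Nat.unpair_right_le (n / 4); have := Nat.div_le_self n 4; omega)

theorem ofNatO_encode : ∀ c, ofNatO (encodeOCode c) = c := by
  intro c
  induction c with
  | zero => simp [encodeOCode, ofNatO]
  | succ => simp [encodeOCode, ofNatO]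
  | left => simp [encodeOCode, ofNatO]
  | right => simp [encodeOCode, ofNatO]
  | oracle => simp [encodeOCode, ofNatO]
  | pair cf cg ihf ihg =>
    have : encodeOCode (.pair cf cg) = 4 * Nat.pair (encodeOCode cf) (encodeOCode cg) + 5 := rfl
    rw [this]
    have e4 : (4 * Nat.pair (encodeOCode cf) (encodeOCode cg)) % 4 = 0 := by omega
    have d4 : (4 * Nat.pair (encodeOCode cf) (encodeOCode cg)) / 4
        = Nat.pair (encodeOCode cf) (encodeOCode cg) := by omega
    simp [ofNatO, e4, d4, Nat.unpair_pair, ihf, ihg]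
  | comp cf cg ihf ihg =>
    have : encodeOCode (.comp cf cg) = (4 * Nat.pair (encodeOCode cf) (encodeOCode cg) + 1) + 5 := rfl
    rw [this]
    have e4 : (4 * Nat.pair (encodeOCode cf) (encodeOCode cg) + 1) % 4 = 1 := by omega
    have d4 : (4 * Nat.pair (encodeOCode cf) (encodeOCode cg) + 1) / 4
        = Nat.pair (encodeOCode cf) (encodeOCode cg) := by omega
    simp [ofNatO, e4, d4, Nat.unpair_pair, ihf, ihg]
  | prec cf cg ihf ihg =>
    have : encodeOCode (.prec cf cg) = (4 * Nat.pair (encodeOCode cf) (encodeOCode cg) + 2) + 5 := rfl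
    rw [this]
    have e4 : (4 * Nat.pair (encodeOCode cf) (encodeOCode cg) + 2) % 4 = 2 := by omega
    have d4 : (4 * Nat.pair (encodeOCode cf) (encodeOCode cg) + 2) / 4
        = Nat.pair (encodeOCode cf) (encodeOCode cg) := by omega
    simp [ofNatO, e4, d4, Nat.unpair_pair, ihf, ihg]
  | rfind' cf ihf =>
    have : encodeOCode (.rfind' cf) = (4 * encodeOCode cf + 3) + 5 := rfl
    rw [this]
    have e4 : (4 * encodeOCode cf + 3) % 4 = 3 := by omega
    have d4 : (4 * encodeOCode cf + 3) / 4 = encodeOCode cf := by omega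
    simp [ofNatO, e4, d4, ihf]

theorem encodeOCode_injective : Function.Injective encodeOCode := by
  intro a b h
  have := congrArg ofNatO h
  rwa [ofNatO_encode, ofNatO_encode] at this

theorem encode_ofNatO : ∀ n, encodeOCode (ofNatO n) = n := by
  intro n
  induction n using Nat.strong_induction_on with
  | _ n ih =>
    match n with
    | 0 => simp [encodeOCode, ofNatO]
    | 1 => simp [encodeOCode, ofNatO]
    | 2 => simp [encodeOCode, ofNatO]
    | 3 => simp [encodeOCode, ofNatO]
    | 4 => simp [encodeOCode, ofNatO]
    | n + 5 =>
      have h4 : n / 4 < n + 5 := lt_of_le_of_lt (Nat.div_le_self _ _) (by omega)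
      have h1 : (n / 4).unpair.1 < n + 5 := lt_of_le_of_lt (Nat.unpair_left_le _) h4
      have h2 : (n / 4).unpair.2 < n + 5 := lt_of_le_of_lt (Nat.unpair_right_le _) h4
      have ihp := ih (n / 4) h4
      have ih1 := ih (n / 4).unpair.1 h1
      have ih2 := ih (n / 4).unpair.2 h2
      have hmod : n % 4 = 0 ∨ n % 4 = 1 ∨ n % 4 = 2 ∨ n % 4 = 3 := by omega
      rcases hmod with h | h | h | h <;>
        · simp only [ofNatO, h]
          simp [encodeOCode, ih1, ih2, ihp, Nat.pair_unpair]
          omega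

/-- Membership in the jump, in terms of `ofNatO`. -/
theorem mem_jump_iff {A : Set ℕ} {n : ℕ} :
    n ∈ jump A ↔ (evalo (chi A) (ofNatO n.unpair.1) n.unpair.2).Dom := by
  constructor
  · rintro ⟨c, hc, hd⟩
    rwa [← hc, ofNatO_encode]
  · intro h
    exact ⟨ofNatO n.unpair.1, encode_ofNatO _, h⟩

theorem pair_mem_jump_iff {A : Set ℕ} {c : OCode} {x : ℕ} :
    Nat.pair (encodeOCode c) x ∈ jump A ↔ (evalo (chi A) c x).Dom := by
  rw [mem_jump_iff, Nat.unpair_pair, ofNatO_encode]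


/-! ### Translation of plain codes into oracle codes -/

/-- Translate a plain `Nat.Partrec.Code` into an `OCode` (not using the oracle). -/
def ofC : Code → OCode
  | .zero => .zero
  | .succ => .succ
  | .left => .left
  | .right => .right
  | .pair cf cg => .pair (ofC cf) (ofC cg)
  | .comp cf cg => .comp (ofC cf) (ofC cg)
  | .prec cf cg => .prec (ofC cf) (ofC cg)
  | .rfind' cf => .rfind' (ofC cf)

theorem evalo_ofC (O : ℕ → ℕ) : ∀ c : Code, evalo O (ofC c) = eval c := by
  intro c
  induction c with
  | zero => rfl
  | succ => rfl
  | left => rfl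
  | right => rfl
  | pair cf cg ihf ihg => simp [ofC, evalo, eval, ihf, ihg]; rfl
  | comp cf cg ihf ihg => simp [ofC, evalo, eval, ihf, ihg]; rfl
  | prec cf cg ihf ihg => simp [ofC, evalo, eval, ihf, ihg]; rfl
  | rfind' cf ihf => simp [ofC, evalo, eval, ihf]; rfl

/-- Every (plain) computable function is computable relative to any oracle. -/
theorem recFun_of_computable {f : ℕ → ℕ} (hf : Computable f) (O : ℕ → ℕ) : RecFun O f := by
  have : Nat.Partrec (fun n => Part.some (f n) : ℕ →. ℕ) := Partrec.nat_iff.1 hf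
  obtain ⟨c, hc⟩ := Nat.Partrec.Code.exists_code.1 this
  exact ⟨ofC c, fun n => by rw [evalo_ofC, hc]⟩

theorem RecFun.id (O : ℕ → ℕ) : RecFun O (fun n => n) :=
  recFun_of_computable Computable.id O

theorem RecFun.oracle (O : ℕ → ℕ) : RecFun O O :=
  ⟨.oracle, fun n => rfl⟩

theorem RecFun.comp {O f g : ℕ → ℕ} (hf : RecFun O f) (hg : RecFun O g) :
    RecFun O (fun n => f (g n)) := by
  obtain ⟨cf, hcf⟩ := hf
  obtain ⟨cg, hcg⟩ := hg
  exact ⟨.comp cf cg, fun n => by simp [evalo, hcg n]; exact (Part.bind_some _ _).trans (hcf (g n))⟩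

theorem RecFun.pair {O f g : ℕ → ℕ} (hf : RecFun O f) (hg : RecFun O g) :
    RecFun O (fun n => Nat.pair (f n) (g n)) := by
  obtain ⟨cf, hcf⟩ := hf
  obtain ⟨cg, hcg⟩ := hg
  refine ⟨.pair cf cg, fun n => ?_⟩
  simp [evalo, hcf n, hcg n, Seq.seq]

/-- Oracle substitution: replace the `oracle` instruction by the code `d`. -/
def substO (d : OCode) : OCode → OCode
  | .zero => .zero
  | .succ => .succ
  | .left => .left
  | .right => .right
  | .oracle => d
  | .pair cf cg => .pair (substO d cf) (substO d cg)
  | .comp cf cg => .comp (substO d cf) (substO d cg)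
  | .prec cf cg => .prec (substO d cf) (substO d cg)
  | .rfind' cf => .rfind' (substO d cf)

theorem evalo_substO {O O' : ℕ → ℕ} {d : OCode} (hd : ∀ n, evalo O' d n = Part.some (O n)) :
    ∀ c, evalo O' (substO d c) = evalo O c := by
  intro c
  induction c with
  | zero => rfl
  | succ => rfl
  | left => rfl
  | right => rfl
  | oracle => funext n; simp [substO, evalo, hd n]
  | pair cf cg ihf ihg => simp [substO, evalo, ihf, ihg]; rfl
  | comp cf cg ihf ihg => simp [substO, evalo, ihf, ihg]; rfl
  | prec cf cg ihf ihg => simp [substO, evalo, ihf, ihg]; rfl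
  | rfind' cf ihf => simp [substO, evalo, ihf]; rfl

/-- Relative computability is transitive in the oracle. -/
theorem RecFun.trans {O O' f : ℕ → ℕ} (hf : RecFun O f) (hO : RecFun O' O) : RecFun O' f := by
  obtain ⟨c, hc⟩ := hf
  obtain ⟨d, hd⟩ := hO
  exact ⟨substO d c, fun n => by rw [evalo_substO hd, hc]⟩

theorem TuringLE.refl (A : Set ℕ) : TuringLE A A := RecFun.oracle _

theorem TuringLE.trans {A B C : Set ℕ} (h1 : TuringLE A B) (h2 : TuringLE B C) :
    TuringLE A C := RecFun.trans h1 h2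

theorem TuringLE.of_recFun {A B : Set ℕ} (h : RecFun (chi B) (chi A)) : TuringLE A B := h

theorem chi_congr {A B : Set ℕ} (h : A = B) : chi A = chi B := by rw [h]


/-! ### Interpreting oracle codes with a partial table oracle -/

/-- The partial "table lookup" function: `p = ⟨l, m⟩` where `l` codes a `List ℕ`. -/
def lookupFn : ℕ → Option ℕ := fun p =>
  (Encodable.decode (α := List ℕ) p.unpair.1).bind fun L => L[p.unpair.2]?

theorem computable_lookupFn : Computable lookupFn := by
  have h1 : Computable fun p : ℕ => (Encodable.decode (α := List ℕ) p.unpair.1) :=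
    Computable.decode.comp (Primrec.fst.comp Primrec.unpair).to_comp
  have h2 : Primrec₂ fun (p : ℕ) (L : List ℕ) => L[p.unpair.2]? :=
    Primrec.list_getElem?.comp Primrec.snd (Primrec.snd.comp (Primrec.unpair.comp Primrec.fst))
  exact (Computable.option_bind h1 h2.to_comp).of_eq fun p => rfl

/-- A fixed plain code for `lookupFn`. -/
noncomputable def cStar : Code :=
  (Nat.Partrec.Code.exists_code.1 (Partrec.nat_iff.1 (Computable.ofOption computable_lookupFn))).choose

theorem eval_cStar (p : ℕ) : eval cStar p = Part.ofOption (lookupFn p) := by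
  have := (Nat.Partrec.Code.exists_code.1
    (Partrec.nat_iff.1 (Computable.ofOption computable_lookupFn))).choose_spec
  exact congrFun this p

/-- The plain code computing the partial function `m ↦ L.get? m` where `l = encode L`. -/
noncomputable def dPn (l : ℕ) : Code :=
  cStar.comp (Code.pair (Code.const l) Code.id)

theorem eval_dPn (L : List ℕ) (m : ℕ) :
    eval (dPn (Encodable.encode L)) m = Part.ofOption (L[m]?) := by
  have : eval (dPn (Encodable.encode L)) m
      = eval cStar (Nat.pair (Encodable.encode L) m) := by
    simp [dPn, Nat.Partrec.Code.eval, Nat.Partrec.Code.eval_const, Nat.Partrec.Code.eval_id,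
      Seq.seq]
    exact Part.bind_some _ _
  rw [this, eval_cStar]
  simp [lookupFn, Nat.unpair_pair, Encodable.encodek]

/-- The table of the first `u` values of `O`. -/
def oTab (O : ℕ → ℕ) (u : ℕ) : List ℕ := (List.range u).map O

theorem get?_oTab (O : ℕ → ℕ) (u n : ℕ) :
    (oTab O u)[n]? = if n < u then some (O n) else none := by
  by_cases h : n < u
  · simp [oTab, h]
  · rw [if_neg h]
    exact List.getElem?_eq_none (by simpa [oTab] using not_lt.1 h)

theorem mem_eval_dPn_oTab {O : ℕ → ℕ} {u n y : ℕ} :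
    y ∈ eval (dPn (Encodable.encode (oTab O u))) n ↔ n < u ∧ y = O n := by
  rw [eval_dPn, get?_oTab]
  by_cases h : n < u <;> simp [h, eq_comm]

/-- Translation of an oracle code to a plain code, replacing the oracle by `d`. -/
def TrO (d : Code) : OCode → Code
  | .zero => .zero
  | .succ => .succ
  | .left => .left
  | .right => .right
  | .oracle => d
  | .pair cf cg => .pair (TrO d cf) (TrO d cg)
  | .comp cf cg => .comp (TrO d cf) (TrO d cg)
  | .prec cf cg => .prec (TrO d cf) (TrO d cg)
  | .rfind' cf => .rfind' (TrO d cf)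

theorem mem_part_pair_iff {p q : Part ℕ} {v : ℕ} :
    v ∈ Nat.pair <$> p <*> q ↔ ∃ a ∈ p, ∃ b ∈ q, v = Nat.pair a b := by
  simp [Seq.seq, eq_comm]

theorem mem_part_bind_iff {p : Part ℕ} {f : ℕ → Part ℕ} {v : ℕ} :
    v ∈ p >>= f ↔ ∃ a ∈ p, v ∈ f a := by
  simp [Part.bind_eq_bind]

theorem mem_part_map_iff {α β} {p : Part α} {f : α → β} {v : β} :
    v ∈ f <$> p ↔ ∃ a ∈ p, f a = v := by
  simp [Part.map_eq_map]

/-- Membership in the `rfind'` part, unfolded. -/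
theorem mem_rfind'_iff {F : ℕ → Part ℕ} {x v : ℕ} :
    v ∈ (Nat.rfind fun n => (fun m => m = 0) <$> F (n + x.unpair.2)).map (· + x.unpair.2) ↔
      ∃ a, v = a + x.unpair.2 ∧ (∃ y ∈ F (a + x.unpair.2), y = 0) ∧
        ∀ m < a, ∃ y ∈ F (m + x.unpair.2), y ≠ 0 := by
  constructor
  · intro h
    rw [Part.mem_map_iff] at h
    obtain ⟨a, ha, rfl⟩ := h
    have h1 := Nat.rfind_spec ha
    have h2 := fun {m} (hm : m < a) => Nat.rfind_min ha hm
    rw [mem_part_map_iff] at h1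
    obtain ⟨y, hy, hy0⟩ := h1
    refine ⟨a, rfl, ⟨y, hy, by simpa using hy0⟩, fun m hm => ?_⟩
    have := h2 hm
    rw [mem_part_map_iff] at this
    obtain ⟨y', hy', hy'0⟩ := this
    exact ⟨y', hy', by simpa using hy'0⟩
  · rintro ⟨a, rfl, ⟨y, hy, hy0⟩, hbelow⟩
    rw [Part.mem_map_iff]
    refine ⟨a, Nat.mem_rfind.2 ⟨?_, fun {m} hm => ?_⟩, rfl⟩
    · rw [mem_part_map_iff]; exact ⟨y, hy, by simpa using hy0⟩
    · obtain ⟨y', hy', hy'0⟩ := hbelow m hm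
      rw [mem_part_map_iff]; exact ⟨y', hy', by simpa using hy'0⟩

theorem evalo_rfind'_eq (O : ℕ → ℕ) (cf : OCode) (x : ℕ) :
    evalo O (.rfind' cf) x =
      (Nat.rfind fun n => (fun m => m = 0) <$> evalo O cf (Nat.pair x.unpair.1 (n + x.unpair.2))).map
        (· + x.unpair.2) := rfl

theorem eval_rfind'_eq (d : Code) (x : ℕ) :
    eval (Code.rfind' d) x =
      (Nat.rfind fun n => (fun m => m = 0) <$> eval d (Nat.pair x.unpair.1 (n + x.unpair.2))).map
        (· + x.unpair.2) := rfl

theorem evalo_prec_eq (O : ℕ → ℕ) (cf cg : OCode) (x : ℕ) :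
    evalo O (.prec cf cg) x =
      Nat.rec (evalo O cf x.unpair.1)
        (fun y IH => IH >>= fun i => evalo O cg (Nat.pair x.unpair.1 (Nat.pair y i)))
        x.unpair.2 := rfl

theorem eval_prec_eq (cf cg : Code) (x : ℕ) :
    eval (Code.prec cf cg) x =
      Nat.rec (eval cf x.unpair.1)
        (fun y IH => IH >>= fun i => eval cg (Nat.pair x.unpair.1 (Nat.pair y i)))
        x.unpair.2 := rfl

theorem precRec_mono {F F' : Part ℕ} {G G' : ℕ → ℕ → Part ℕ}
    (hF : ∀ v ∈ F, v ∈ F') (hG : ∀ y i v, v ∈ G y i → v ∈ G' y i) :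
    ∀ m v, v ∈ (Nat.rec F (fun y IH => IH >>= fun i => G y i) m : Part ℕ) →
      v ∈ (Nat.rec F' (fun y IH => IH >>= fun i => G' y i) m : Part ℕ) := by
  intro m
  induction m with
  | zero => exact hF
  | succ m ihm =>
    intro v hv
    have hv' : v ∈ (Nat.rec F (fun y IH => IH >>= fun i => G y i) m : Part ℕ) >>=
        fun i => G m i := hv
    rw [mem_part_bind_iff] at hv'
    obtain ⟨a, ha, h2⟩ := hv'
    have : v ∈ (Nat.rec F' (fun y IH => IH >>= fun i => G' y i) m : Part ℕ) >>=
        fun i => G' m i := mem_part_bind_iff.2 ⟨a, ihm _ ha, hG _ _ _ h2⟩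
    exact this

/-- Soundness: if `d` under-approximates the total oracle `O`, then the translated plain
code under-approximates the oracle computation. -/
theorem TrO_sound {d : Code} {O : ℕ → ℕ} (hd : ∀ n y, y ∈ eval d n → y = O n) :
    ∀ (c : OCode) (x v : ℕ), v ∈ eval (TrO d c) x → v ∈ evalo O c x := by
  intro c
  induction c with
  | zero => intro x v h; exact h
  | succ => intro x v h; exact h
  | left => intro x v h; exact h
  | right => intro x v h; exact h
  | oracle =>
    intro x v h
    have := hd x v h
    simp [evalo, this]
  | pair cf cg ihf ihg =>
    intro x v h
    have h' : v ∈ Nat.pair <$> eval (TrO d cf) x <*> eval (TrO d cg) x := h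
    rw [mem_part_pair_iff] at h'
    obtain ⟨a, ha, b, hb, rfl⟩ := h'
    show Nat.pair a b ∈ Nat.pair <$> evalo O cf x <*> evalo O cg x
    rw [mem_part_pair_iff]
    exact ⟨a, ihf _ _ ha, b, ihg _ _ hb, rfl⟩
  | comp cf cg ihf ihg =>
    intro x v h
    have h' : v ∈ eval (TrO d cg) x >>= eval (TrO d cf) := h
    replace h' := mem_part_bind_iff.1 h'
    obtain ⟨a, ha, hv⟩ := h'
    show v ∈ evalo O cg x >>= evalo O cf
    exact mem_part_bind_iff.2 ⟨a, ihg _ _ ha, ihf _ _ hv⟩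
  | prec cf cg ihf ihg =>
    intro x v h
    rw [show TrO d (.prec cf cg) = Code.prec (TrO d cf) (TrO d cg) from rfl,
      eval_prec_eq] at h
    rw [evalo_prec_eq]
    exact precRec_mono (ihf _) (fun y i => ihg _) _ _ h
  | rfind' cf ihf =>
    intro x v h
    rw [show TrO d (.rfind' cf) = Code.rfind' (TrO d cf) from rfl, eval_rfind'_eq,
      mem_rfind'_iff (F := fun t => eval (TrO d cf) (Nat.pair x.unpair.1 t))] at h
    rw [evalo_rfind'_eq, mem_rfind'_iff (F := fun t => evalo O cf (Nat.pair x.unpair.1 t))]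
    obtain ⟨a, rfl, ⟨y, hy, hy0⟩, hbelow⟩ := h
    refine ⟨a, rfl, ⟨y, ihf _ _ hy, hy0⟩, fun m hm => ?_⟩
    obtain ⟨y', hy', hy'0⟩ := hbelow m hm
    exact ⟨y', ihf _ _ hy', hy'0⟩

/-- Monotonicity: if `d'` extends `d` (as graphs), translated computations transfer. -/
theorem TrO_mono {d d' : Code} (hd : ∀ n y, y ∈ eval d n → y ∈ eval d' n) :
    ∀ (c : OCode) (x v : ℕ), v ∈ eval (TrO d c) x → v ∈ eval (TrO d' c) x := by
  intro c
  induction c with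
  | zero => intro x v h; exact h
  | succ => intro x v h; exact h
  | left => intro x v h; exact h
  | right => intro x v h; exact h
  | oracle => intro x v h; exact hd x v h
  | pair cf cg ihf ihg =>
    intro x v h
    have h' : v ∈ Nat.pair <$> eval (TrO d cf) x <*> eval (TrO d cg) x := h
    rw [mem_part_pair_iff] at h'
    obtain ⟨a, ha, b, hb, rfl⟩ := h'
    show Nat.pair a b ∈ Nat.pair <$> eval (TrO d' cf) x <*> eval (TrO d' cg) x
    rw [mem_part_pair_iff]
    exact ⟨a, ihf _ _ ha, b, ihg _ _ hb, rfl⟩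
  | comp cf cg ihf ihg =>
    intro x v h
    have h' : v ∈ eval (TrO d cg) x >>= eval (TrO d cf) := h
    replace h' := mem_part_bind_iff.1 h'
    obtain ⟨a, ha, hv⟩ := h'
    show v ∈ eval (TrO d' cg) x >>= eval (TrO d' cf)
    exact mem_part_bind_iff.2 ⟨a, ihg _ _ ha, ihf _ _ hv⟩
  | prec cf cg ihf ihg =>
    intro x v h
    rw [show TrO d (.prec cf cg) = Code.prec (TrO d cf) (TrO d cg) from rfl,
      eval_prec_eq] at h
    rw [show TrO d' (.prec cf cg) = Code.prec (TrO d' cf) (TrO d' cg) from rfl,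
      eval_prec_eq]
    exact precRec_mono (ihf _) (fun y i => ihg _) _ _ h
  | rfind' cf ihf =>
    intro x v h
    rw [show TrO d (.rfind' cf) = Code.rfind' (TrO d cf) from rfl, eval_rfind'_eq,
      mem_rfind'_iff (F := fun t => eval (TrO d cf) (Nat.pair x.unpair.1 t))] at h
    rw [show TrO d' (.rfind' cf) = Code.rfind' (TrO d' cf) from rfl, eval_rfind'_eq,
      mem_rfind'_iff (F := fun t => eval (TrO d' cf) (Nat.pair x.unpair.1 t))]
    obtain ⟨a, rfl, ⟨y, hy, hy0⟩, hbelow⟩ := h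
    refine ⟨a, rfl, ⟨y, ihf _ _ hy, hy0⟩, fun m hm => ?_⟩
    obtain ⟨y', hy', hy'0⟩ := hbelow m hm
    exact ⟨y', ihf _ _ hy', hy'0⟩

theorem dPn_oTab_mono {O : ℕ → ℕ} {u u' : ℕ} (h : u ≤ u') :
    ∀ n y, y ∈ eval (dPn (Encodable.encode (oTab O u))) n →
      y ∈ eval (dPn (Encodable.encode (oTab O u'))) n := by
  intro n y hy
  rw [mem_eval_dPn_oTab] at hy ⊢
  exact ⟨lt_of_lt_of_le hy.1 h, hy.2⟩

/-- The use principle: a convergent oracle computation converges already using a finite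
table of oracle values (with lookups outside the table diverging). -/
theorem use_principle {O : ℕ → ℕ} :
    ∀ (c : OCode) (x v : ℕ), v ∈ evalo O c x →
      ∃ u, v ∈ eval (TrO (dPn (Encodable.encode (oTab O u))) c) x := by
  intro c
  induction c with
  | zero => intro x v h; exact ⟨0, h⟩
  | succ => intro x v h; exact ⟨0, h⟩
  | left => intro x v h; exact ⟨0, h⟩
  | right => intro x v h; exact ⟨0, h⟩
  | oracle =>
    intro x v h
    refine ⟨x + 1, ?_⟩
    have hv : v = O x := by simpa [evalo] using h
    show v ∈ eval (dPn _) x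
    rw [mem_eval_dPn_oTab]
    exact ⟨Nat.lt_succ_self x, hv⟩
  | pair cf cg ihf ihg =>
    intro x v h
    have h' : v ∈ Nat.pair <$> evalo O cf x <*> evalo O cg x := h
    rw [mem_part_pair_iff] at h'
    obtain ⟨a, ha, b, hb, rfl⟩ := h'
    obtain ⟨u1, hu1⟩ := ihf _ _ ha
    obtain ⟨u2, hu2⟩ := ihg _ _ hb
    refine ⟨max u1 u2, ?_⟩
    show _ ∈ Nat.pair <$> eval (TrO _ cf) x <*> eval (TrO _ cg) x
    rw [mem_part_pair_iff]
    exact ⟨a, TrO_mono (dPn_oTab_mono (le_max_left _ _)) _ _ _ hu1,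
           b, TrO_mono (dPn_oTab_mono (le_max_right _ _)) _ _ _ hu2, rfl⟩
  | comp cf cg ihf ihg =>
    intro x v h
    have h' : v ∈ evalo O cg x >>= evalo O cf := h
    replace h' := mem_part_bind_iff.1 h'
    obtain ⟨a, ha, hv⟩ := h'
    obtain ⟨u1, hu1⟩ := ihg _ _ ha
    obtain ⟨u2, hu2⟩ := ihf _ _ hv
    refine ⟨max u1 u2, ?_⟩
    show _ ∈ eval (TrO _ cg) x >>= eval (TrO _ cf)
    exact mem_part_bind_iff.2 ⟨a, TrO_mono (dPn_oTab_mono (le_max_left _ _)) _ _ _ hu1,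
           TrO_mono (dPn_oTab_mono (le_max_right _ _)) _ _ _ hu2⟩
  | prec cf cg ihf ihg =>
    intro x v h
    rw [evalo_prec_eq] at h
    suffices H : ∀ (m : ℕ) (v : ℕ),
        v ∈ (Nat.rec (evalo O cf x.unpair.1)
          (fun y IH => IH >>= fun i => evalo O cg (Nat.pair x.unpair.1 (Nat.pair y i))) m :
            Part ℕ) →
        ∃ u, v ∈ (Nat.rec (eval (TrO (dPn (Encodable.encode (oTab O u))) cf) x.unpair.1)
          (fun y IH => IH >>= fun i =>
            eval (TrO (dPn (Encodable.encode (oTab O u))) cg) (Nat.pair x.unpair.1 (Nat.pair y i)))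
            m : Part ℕ) by
      obtain ⟨u, hu⟩ := H x.unpair.2 v h
      refine ⟨u, ?_⟩
      rw [show TrO (dPn (Encodable.encode (oTab O u))) (.prec cf cg)
        = Code.prec (TrO (dPn (Encodable.encode (oTab O u))) cf)
            (TrO (dPn (Encodable.encode (oTab O u))) cg) from rfl, eval_prec_eq]
      exact hu
    intro m
    induction m with
    | zero => intro v hv; exact ihf _ _ hv
    | succ m ihm =>
      intro v hv
      have hv' : v ∈ (Nat.rec (evalo O cf x.unpair.1)
          (fun y IH => IH >>= fun i => evalo O cg (Nat.pair x.unpair.1 (Nat.pair y i))) m :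
            Part ℕ) >>= fun i => evalo O cg (Nat.pair x.unpair.1 (Nat.pair m i)) := hv
      rw [mem_part_bind_iff] at hv'
      obtain ⟨a, ha, hv2⟩ := hv'
      obtain ⟨u1, hu1⟩ := ihm _ ha
      obtain ⟨u2, hu2⟩ := ihg _ _ hv2
      refine ⟨max u1 u2, ?_⟩
      have lift1 := precRec_mono
        (F := eval (TrO (dPn (Encodable.encode (oTab O u1))) cf) x.unpair.1)
        (F' := eval (TrO (dPn (Encodable.encode (oTab O (max u1 u2)))) cf) x.unpair.1)
        (G := fun y i => eval (TrO (dPn (Encodable.encode (oTab O u1))) cg)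
          (Nat.pair x.unpair.1 (Nat.pair y i)))
        (G' := fun y i => eval (TrO (dPn (Encodable.encode (oTab O (max u1 u2)))) cg)
          (Nat.pair x.unpair.1 (Nat.pair y i)))
        (fun v hv => TrO_mono (dPn_oTab_mono (le_max_left _ _)) _ _ _ hv)
        (fun y i v hv => TrO_mono (dPn_oTab_mono (le_max_left _ _)) _ _ _ hv) m a hu1
      have : v ∈ (Nat.rec (eval (TrO (dPn (Encodable.encode (oTab O (max u1 u2)))) cf) x.unpair.1)
          (fun y IH => IH >>= fun i =>
            eval (TrO (dPn (Encodable.encode (oTab O (max u1 u2)))) cg)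
              (Nat.pair x.unpair.1 (Nat.pair y i))) m : Part ℕ) >>=
          fun i => eval (TrO (dPn (Encodable.encode (oTab O (max u1 u2)))) cg)
            (Nat.pair x.unpair.1 (Nat.pair m i)) :=
        mem_part_bind_iff.2 ⟨a, lift1, TrO_mono (dPn_oTab_mono (le_max_right _ _)) _ _ _ hu2⟩
      exact this
  | rfind' cf ihf =>
    intro x v h
    rw [evalo_rfind'_eq, mem_rfind'_iff (F := fun t => evalo O cf (Nat.pair x.unpair.1 t))] at h
    obtain ⟨a, rfl, ⟨y, hy, hy0⟩, hbelow⟩ := h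
    obtain ⟨u0, hu0⟩ := ihf _ _ hy
    have key : ∀ m (_ : m < a), ∃ u y', y' ∈ eval (TrO (dPn (Encodable.encode (oTab O u))) cf)
        (Nat.pair x.unpair.1 (m + x.unpair.2)) ∧ y' ≠ 0 := by
      intro m hm
      obtain ⟨y', hy', hy'0⟩ := hbelow m hm
      obtain ⟨u, hu⟩ := ihf _ _ hy'
      exact ⟨u, y', hu, hy'0⟩
    choose us ys hys hys0 using key
    classical
    obtain ⟨U, hU0, hU⟩ : ∃ U, u0 ≤ U ∧ ∀ m (hm : m < a), us m hm ≤ U := by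
      refine ⟨max u0 ((Finset.range a).sup fun m => if hm : m < a then us m hm else 0),
        le_max_left _ _, ?_⟩
      intro m hm
      have : us m hm = (fun m => if hm' : m < a then us m hm' else 0) m := by simp [hm]
      rw [this]
      exact le_trans (Finset.le_sup (f := fun k => if hk : k < a then us k hk else 0)
        (Finset.mem_range.2 hm)) (le_max_right _ _)
    refine ⟨U, ?_⟩
    rw [show TrO (dPn (Encodable.encode (oTab O U))) (.rfind' cf)
      = Code.rfind' (TrO (dPn (Encodable.encode (oTab O U))) cf) from rfl, eval_rfind'_eq,
      mem_rfind'_iff (F := fun t => eval (TrO (dPn (Encodable.encode (oTab O U))) cf)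
        (Nat.pair x.unpair.1 t))]
    refine ⟨a, rfl, ⟨y, TrO_mono (dPn_oTab_mono hU0) _ _ _ hu0, hy0⟩, fun m hm => ?_⟩
    exact ⟨ys m hm, TrO_mono (dPn_oTab_mono (hU m hm)) _ _ _ (hys m hm), hys0 m hm⟩


/-! ### The numeric translation `trN` -/

open Nat.Partrec.Code (encodeCode ofNatCode)

/-- Numeric version of `TrO`: translates an `OCode` number into a plain `Code` number,
replacing the oracle instruction by (the number of) a fixed plain code `d`. -/
def trN (d : ℕ) : ℕ → ℕ
  | 0 => 0
  | 1 => 1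
  | 2 => 2
  | 3 => 3
  | 4 => d
  | n + 5 =>
    let p := n / 4
    have h4 : p < n + 5 := lt_of_le_of_lt (Nat.div_le_self _ _) (by omega)
    have h1 : p.unpair.1 < n + 5 := lt_of_le_of_lt p.unpair_left_le h4
    have h2 : p.unpair.2 < n + 5 := lt_of_le_of_lt p.unpair_right_le h4
    match n % 4 with
    | 0 => 2 * (2 * Nat.pair (trN d p.unpair.1) (trN d p.unpair.2)) + 4
    | 1 => 2 * (2 * Nat.pair (trN d p.unpair.1) (trN d p.unpair.2) + 1) + 4
    | 2 => (2 * (2 * Nat.pair (trN d p.unpair.1) (trN d p.unpair.2)) + 1) + 4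
    | _ => (2 * (2 * trN d p + 1) + 1) + 4
decreasing_by all_goals (have := Nat.unpair_left_le (n / 4); have := Nat.unpair_right_le (n / 4); have := Nat.div_le_self n 4; omega)

theorem trN_spec (dc : Code) : ∀ c : OCode,
    trN (encodeCode dc) (encodeOCode c) = encodeCode (TrO dc c) := by
  intro c
  induction c with
  | zero => simp [trN, TrO, encodeCode, encodeOCode]
  | succ => simp [trN, TrO, encodeCode, encodeOCode]
  | left => simp [trN, TrO, encodeCode, encodeOCode]
  | right => simp [trN, TrO, encodeCode, encodeOCode]
  | oracle => simp [trN, TrO, encodeCode, encodeOCode]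
  | pair cf cg ihf ihg =>
    have he : encodeOCode (.pair cf cg) = 4 * Nat.pair (encodeOCode cf) (encodeOCode cg) + 5 := rfl
    rw [he]
    have e4 : (4 * Nat.pair (encodeOCode cf) (encodeOCode cg)) % 4 = 0 := by omega
    have d4 : (4 * Nat.pair (encodeOCode cf) (encodeOCode cg)) / 4
        = Nat.pair (encodeOCode cf) (encodeOCode cg) := by omega
    simp [trN, e4, d4, Nat.unpair_pair, ihf, ihg, TrO, encodeCode]
  | comp cf cg ihf ihg =>
    have he : encodeOCode (.comp cf cg)
        = (4 * Nat.pair (encodeOCode cf) (encodeOCode cg) + 1) + 5 := rfl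
    rw [he]
    have e4 : (4 * Nat.pair (encodeOCode cf) (encodeOCode cg) + 1) % 4 = 1 := by omega
    have d4 : (4 * Nat.pair (encodeOCode cf) (encodeOCode cg) + 1) / 4
        = Nat.pair (encodeOCode cf) (encodeOCode cg) := by omega
    simp [trN, e4, d4, Nat.unpair_pair, ihf, ihg, TrO, encodeCode]
  | prec cf cg ihf ihg =>
    have he : encodeOCode (.prec cf cg)
        = (4 * Nat.pair (encodeOCode cf) (encodeOCode cg) + 2) + 5 := rfl
    rw [he]
    have e4 : (4 * Nat.pair (encodeOCode cf) (encodeOCode cg) + 2) % 4 = 2 := by omega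
    have d4 : (4 * Nat.pair (encodeOCode cf) (encodeOCode cg) + 2) / 4
        = Nat.pair (encodeOCode cf) (encodeOCode cg) := by omega
    simp [trN, e4, d4, Nat.unpair_pair, ihf, ihg, TrO, encodeCode]
  | rfind' cf ihf =>
    have he : encodeOCode (.rfind' cf) = (4 * encodeOCode cf + 3) + 5 := rfl
    rw [he]
    have e4 : (4 * encodeOCode cf + 3) % 4 = 3 := by omega
    have d4 : (4 * encodeOCode cf + 3) / 4 = encodeOCode cf := by omega
    simp [trN, e4, d4, ihf, TrO, encodeCode]

/-- The step function for computing `trN` by strong recursion. -/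
def trNStep (d : ℕ) (L : List ℕ) : ℕ :=
  if L.length = 0 then 0
  else if L.length = 1 then 1
  else if L.length = 2 then 2
  else if L.length = 3 then 3
  else if L.length = 4 then d
  else
    let m := L.length - 5
    let p := m / 4
    if m % 4 = 0 then 2 * (2 * Nat.pair (L.getD p.unpair.1 0) (L.getD p.unpair.2 0)) + 4
    else if m % 4 = 1 then 2 * (2 * Nat.pair (L.getD p.unpair.1 0) (L.getD p.unpair.2 0) + 1) + 4
    else if m % 4 = 2 then (2 * (2 * Nat.pair (L.getD p.unpair.1 0) (L.getD p.unpair.2 0)) + 1) + 4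
    else (2 * (2 * L.getD p 0 + 1) + 1) + 4

theorem getD_map_range {f : ℕ → ℕ} {n i : ℕ} (h : i < n) :
    ((List.range n).map f).getD i 0 = f i := by
  rw [List.getD_eq_getElem?_getD]
  simp [List.getElem?_range, h]

theorem trNStep_spec (d n : ℕ) : trNStep d ((List.range n).map (trN d)) = trN d n := by
  have hlen : ((List.range n).map (trN d)).length = n := by simp
  match n with
  | 0 => simp [trNStep, hlen, trN]
  | 1 => simp [trNStep, hlen, trN]
  | 2 => simp [trNStep, hlen, trN]
  | 3 => simp [trNStep, hlen, trN]
  | 4 => simp [trNStep, hlen, trN]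
  | (n + 5) =>
    have h4 : n / 4 < n + 5 := lt_of_le_of_lt (Nat.div_le_self _ _) (by omega)
    have h1 : (n / 4).unpair.1 < n + 5 := lt_of_le_of_lt (Nat.unpair_left_le _) h4
    have h2 : (n / 4).unpair.2 < n + 5 := lt_of_le_of_lt (Nat.unpair_right_le _) h4
    rw [trNStep]
    rw [hlen]
    simp only [show ¬(n + 5 = 0) by omega, show ¬(n + 5 = 1) by omega,
      show ¬(n + 5 = 2) by omega, show ¬(n + 5 = 3) by omega, show ¬(n + 5 = 4) by omega,
      if_false, Nat.add_sub_cancel]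
    have hmod : n % 4 = 0 ∨ n % 4 = 1 ∨ n % 4 = 2 ∨ n % 4 = 3 := by omega
    rcases hmod with h | h | h | h <;>
      simp [h, trN, List.getElem?_range, h1, h2, h4]

theorem trN_primrec : Primrec₂ trN := by
  have hstep : Primrec₂ (fun d L => some (trNStep d L) : ℕ → List ℕ → Option ℕ) := by
    have hlen : Primrec fun q : ℕ × List ℕ => q.2.length :=
      Primrec.list_length.comp Primrec.snd
    have hm : Primrec fun q : ℕ × List ℕ => q.2.length - 5 :=
      Primrec.nat_sub.comp hlen (Primrec.const 5)
    have hp : Primrec fun q : ℕ × List ℕ => (q.2.length - 5) / 4 :=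
      Primrec.nat_div.comp hm (Primrec.const 4)
    have hg1 : Primrec fun q : ℕ × List ℕ => q.2.getD ((q.2.length - 5) / 4).unpair.1 0 :=
      (Primrec.list_getD 0).comp Primrec.snd
        ((Primrec.fst.comp Primrec.unpair).comp hp)
    have hg2 : Primrec fun q : ℕ × List ℕ => q.2.getD ((q.2.length - 5) / 4).unpair.2 0 :=
      (Primrec.list_getD 0).comp Primrec.snd
        ((Primrec.snd.comp Primrec.unpair).comp hp)
    have hgp : Primrec fun q : ℕ × List ℕ => q.2.getD ((q.2.length - 5) / 4) 0 :=
      (Primrec.list_getD 0).comp Primrec.snd hp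
    have hpair : Primrec fun q : ℕ × List ℕ =>
        Nat.pair (q.2.getD ((q.2.length - 5) / 4).unpair.1 0)
          (q.2.getD ((q.2.length - 5) / 4).unpair.2 0) :=
      Primrec₂.natPair.comp hg1 hg2
    have hmod : Primrec fun q : ℕ × List ℕ => (q.2.length - 5) % 4 :=
      Primrec.nat_mod.comp hm (Primrec.const 4)
    have e0 : Primrec fun q : ℕ × List ℕ =>
        2 * (2 * Nat.pair (q.2.getD ((q.2.length - 5) / 4).unpair.1 0)
          (q.2.getD ((q.2.length - 5) / 4).unpair.2 0)) + 4 :=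
      Primrec.nat_add.comp
        (Primrec.nat_mul.comp (Primrec.const 2) (Primrec.nat_mul.comp (Primrec.const 2) hpair))
        (Primrec.const 4)
    have e1 : Primrec fun q : ℕ × List ℕ =>
        2 * (2 * Nat.pair (q.2.getD ((q.2.length - 5) / 4).unpair.1 0)
          (q.2.getD ((q.2.length - 5) / 4).unpair.2 0) + 1) + 4 :=
      Primrec.nat_add.comp
        (Primrec.nat_mul.comp (Primrec.const 2)
          (Primrec.nat_add.comp (Primrec.nat_mul.comp (Primrec.const 2) hpair) (Primrec.const 1)))
        (Primrec.const 4)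
    have e2 : Primrec fun q : ℕ × List ℕ =>
        (2 * (2 * Nat.pair (q.2.getD ((q.2.length - 5) / 4).unpair.1 0)
          (q.2.getD ((q.2.length - 5) / 4).unpair.2 0)) + 1) + 4 :=
      Primrec.nat_add.comp
        (Primrec.nat_add.comp
          (Primrec.nat_mul.comp (Primrec.const 2) (Primrec.nat_mul.comp (Primrec.const 2) hpair))
          (Primrec.const 1))
        (Primrec.const 4)
    have e3 : Primrec fun q : ℕ × List ℕ =>
        (2 * (2 * (q.2.getD ((q.2.length - 5) / 4) 0) + 1) + 1) + 4 :=
      Primrec.nat_add.comp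
        (Primrec.nat_add.comp
          (Primrec.nat_mul.comp (Primrec.const 2)
            (Primrec.nat_add.comp (Primrec.nat_mul.comp (Primrec.const 2) hgp)
              (Primrec.const 1)))
          (Primrec.const 1))
        (Primrec.const 4)
    have heq : ∀ (j : ℕ), PrimrecPred fun q : ℕ × List ℕ => q.2.length = j := fun j =>
      Primrec.eq.comp hlen (Primrec.const j)
    have heqm : ∀ (j : ℕ), PrimrecPred fun q : ℕ × List ℕ => (q.2.length - 5) % 4 = j := fun j =>
      Primrec.eq.comp hmod (Primrec.const j)
    have main : Primrec fun q : ℕ × List ℕ => trNStep q.1 q.2 := by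
      unfold trNStep
      exact .ite (heq 0) (Primrec.const 0) <|
        .ite (heq 1) (Primrec.const 1) <|
        .ite (heq 2) (Primrec.const 2) <|
        .ite (heq 3) (Primrec.const 3) <|
        .ite (heq 4) Primrec.fst <|
        .ite (heqm 0) e0 <| .ite (heqm 1) e1 <| .ite (heqm 2) e2 e3
    exact (Primrec.option_some.comp main).to₂
  exact Primrec.nat_strong_rec _ hstep fun d n => by rw [trNStep_spec]


/-! ### Basic facts about `chi` -/

theorem chi_eq_one_iff {A : Set ℕ} {n : ℕ} : chi A n = 1 ↔ n ∈ A := by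
  by_cases h : n ∈ A <;> simp [chi, h]

theorem chi_cases (A : Set ℕ) (n : ℕ) : chi A n = 0 ∨ chi A n = 1 := by
  by_cases h : n ∈ A <;> simp [chi, h]

/-! ### More `RecFun` combinators -/

theorem evalo_cid (O : ℕ → ℕ) (n : ℕ) : evalo O (.pair .left .right) n = Part.some n := by
  have : evalo O (.pair .left .right) n
      = Nat.pair <$> Part.some n.unpair.1 <*> Part.some n.unpair.2 := rfl
  rw [this]
  simp [Seq.seq, Nat.pair_unpair]

theorem part_map_dom {α β : Type*} (f : α → β) (o : Part α) : (o.map f).Dom ↔ o.Dom :=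
  Iff.rfl

theorem part_natrec_succ (F0 : Part ℕ) (G : ℕ → ℕ → Part ℕ) (m : ℕ) :
    (Nat.rec F0 (fun y IH => IH >>= fun i => G y i) (m + 1) : Part ℕ)
      = (Nat.rec F0 (fun y IH => IH >>= fun i => G y i) m : Part ℕ) >>= fun i => G m i := rfl

/-- Primitive recursion relative to an oracle. -/
theorem RecFun.natrec {O F : ℕ → ℕ} (a : ℕ) (hF : RecFun O F) :
    RecFun O (fun n => Nat.rec a (fun s prev => F (Nat.pair s prev)) n) := by
  obtain ⟨cb, hcb⟩ := recFun_of_computable (Computable.const a) O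
  obtain ⟨cF, hcF⟩ := hF
  refine ⟨.comp (.prec cb (.comp cF .right)) (.pair .zero (.pair .left .right)), ?_⟩
  have h3 : ∀ y i, evalo O (.comp cF .right) (Nat.pair 0 (Nat.pair y i))
      = Part.some (F (Nat.pair y i)) := by
    intro y i
    have heq : evalo O (.comp cF .right) (Nat.pair 0 (Nat.pair y i))
        = evalo O .right (Nat.pair 0 (Nat.pair y i)) >>= evalo O cF := rfl
    rw [heq]
    have hr : evalo O .right (Nat.pair 0 (Nat.pair y i)) = Part.some (Nat.pair y i) := by
      simp [evalo, Nat.unpair_pair]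
    rw [hr]
    exact (Part.bind_some _ _).trans (hcF _)
  have core : ∀ n, evalo O (.prec cb (.comp cF .right)) (Nat.pair 0 n)
      = Part.some (Nat.rec a (fun s prev => F (Nat.pair s prev)) n) := by
    intro n
    rw [evalo_prec_eq, Nat.unpair_pair]
    induction n with
    | zero => exact hcb 0
    | succ m ihm =>
      rw [part_natrec_succ, ihm]
      exact (Part.bind_some _ _).trans (h3 _ _)
  intro n
  have h1 : evalo O (.pair .zero (.pair .left .right)) n = Part.some (Nat.pair 0 n) := by
    have heq : evalo O (.pair .zero (.pair .left .right)) n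
        = Nat.pair <$> evalo O .zero n <*> evalo O (.pair .left .right) n := rfl
    rw [heq, evalo_cid]
    simp [evalo, Seq.seq, pure, PFun.pure]
  have h2 : evalo O (.comp (.prec cb (.comp cF .right)) (.pair .zero (.pair .left .right))) n
      = evalo O (.prec cb (.comp cF .right)) (Nat.pair 0 n) := by
    have heq : evalo O (.comp (.prec cb (.comp cF .right)) (.pair .zero (.pair .left .right))) n
        = evalo O (.pair .zero (.pair .left .right)) n >>= evalo O (.prec cb (.comp cF .right)) :=
      rfl
    rw [heq, h1]
    exact Part.bind_some _ _
  rw [h2, core]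

/-- Unbounded search: the domain version. -/
theorem RecFun.rfind_dom' {O f : ℕ → ℕ} (hf : RecFun O f) :
    ∃ c : OCode, ∀ n, (evalo O c n).Dom ↔ ∃ w, f (Nat.pair n w) = 0 := by
  obtain ⟨cf, hcf⟩ := hf
  refine ⟨.comp (.rfind' cf) (.pair (.pair .left .right) .zero), fun n => ?_⟩
  have h1 : evalo O (.pair (.pair .left .right) .zero) n = Part.some (Nat.pair n 0) := by
    have : evalo O (.pair (.pair .left .right) .zero) n
        = Nat.pair <$> evalo O (.pair .left .right) n <*> evalo O .zero n := rfl
    rw [this, evalo_cid]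
    simp [evalo, Seq.seq, pure, PFun.pure]
  have h2 : evalo O (.comp (.rfind' cf) (.pair (.pair .left .right) .zero)) n
      = evalo O (.rfind' cf) (Nat.pair n 0) := by
    have : evalo O (.comp (.rfind' cf) (.pair (.pair .left .right) .zero)) n
        = evalo O (.pair (.pair .left .right) .zero) n >>= evalo O (.rfind' cf) := rfl
    rw [this, h1]
    exact Part.bind_some _ _
  rw [h2, evalo_rfind'_eq]
  simp only [Nat.unpair_pair]
  rw [part_map_dom]
  refine Nat.rfind_dom.trans ?_
  constructor
  · rintro ⟨w, hw, -⟩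
    refine ⟨w, ?_⟩
    simp [hcf] at hw
    exact hw
  · rintro ⟨w, hw⟩
    exact ⟨w, by simp [hcf, hw], fun {m} _ => by simp [hcf]⟩

/-- Unbounded search: the value version. -/
theorem RecFun.findVal {O f : ℕ → ℕ} (hf : RecFun O f) (h : ∀ n, ∃ w, f (Nat.pair n w) = 0) :
    RecFun O (fun n => Nat.find (h n)) := by
  obtain ⟨cf, hcf⟩ := hf
  refine ⟨.comp (.rfind' cf) (.pair (.pair .left .right) .zero), fun n => ?_⟩
  have h1 : evalo O (.pair (.pair .left .right) .zero) n = Part.some (Nat.pair n 0) := by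
    have : evalo O (.pair (.pair .left .right) .zero) n
        = Nat.pair <$> evalo O (.pair .left .right) n <*> evalo O .zero n := rfl
    rw [this, evalo_cid]
    simp [evalo, Seq.seq, pure, PFun.pure]
  have h2 : evalo O (.comp (.rfind' cf) (.pair (.pair .left .right) .zero)) n
      = evalo O (.rfind' cf) (Nat.pair n 0) := by
    have : evalo O (.comp (.rfind' cf) (.pair (.pair .left .right) .zero)) n
        = evalo O (.pair (.pair .left .right) .zero) n >>= evalo O (.rfind' cf) := rfl
    rw [this, h1]
    exact Part.bind_some _ _
  rw [h2, evalo_rfind'_eq]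
  apply Part.eq_some_iff.2
  simp only [Nat.unpair_pair]
  rw [Part.mem_map_iff]
  refine ⟨Nat.find (h n), Nat.mem_rfind.2 ⟨?_, fun {m} hm => ?_⟩, by simp⟩
  · simp [hcf, Nat.find_spec (h n)]
  · simp [hcf]
    exact Nat.find_min (h n) hm

/-! ### Decoding helpers and the reversed oracle table -/

def decN (m : ℕ) : List ℕ := (Encodable.decode (α := List ℕ) m).getD []

def decL (m : ℕ) : List Bool := (Encodable.decode (α := List Bool) m).getD []

theorem decN_encode (L : List ℕ) : decN (Encodable.encode L) = L := by
  simp [decN, Encodable.encodek]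

theorem decL_encode (L : List Bool) : decL (Encodable.encode L) = L := by
  simp [decL, Encodable.encodek]

theorem primrec_decN : Primrec decN :=
  Primrec.option_getD.comp Primrec.decode (Primrec.const [])

theorem primrec_decL : Primrec decL :=
  Primrec.option_getD.comp Primrec.decode (Primrec.const [])

/-- Encoded reversed table of the first `u` values of `chi A`. -/
noncomputable def atabF (A : Set ℕ) : ℕ → ℕ := fun u =>
  Nat.rec 0 (fun s prev => Nat.pair (chi A s) prev + 1) u

theorem atabF_eq (A : Set ℕ) (u : ℕ) :
    atabF A u = Encodable.encode ((oTab (chi A) u).reverse) := by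
  induction u with
  | zero => simp [atabF, oTab]
  | succ u ih =>
    have : (oTab (chi A) (u + 1)).reverse = chi A u :: (oTab (chi A) u).reverse := by
      simp [oTab, List.range_succ]
    rw [this, Encodable.encode_list_cons]
    have : atabF A (u + 1) = Nat.pair (chi A u) (atabF A u) + 1 := rfl
    rw [this, ih]
    rfl

theorem decN_atabF (A : Set ℕ) (u : ℕ) : (decN (atabF A u)).reverse = oTab (chi A) u := by
  rw [atabF_eq, decN_encode, List.reverse_reverse]

theorem RecFun.of_eq {O f g : ℕ → ℕ} (hf : RecFun O f) (h : ∀ n, f n = g n) : RecFun O g := by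
  obtain ⟨c, hc⟩ := hf
  exact ⟨c, fun n => by rw [← h n]; exact hc n⟩

theorem RecFun.atab {O : ℕ → ℕ} {A : Set ℕ} (hA : RecFun O (chi A)) : RecFun O (atabF A) := by
  have h1 : RecFun O fun m => m.unpair.1 :=
    recFun_of_computable ((Primrec.fst.comp Primrec.unpair).to_comp) O
  have h2 : RecFun O fun m => m.unpair.2 :=
    recFun_of_computable ((Primrec.snd.comp Primrec.unpair).to_comp) O
  have hsucc : RecFun O fun m => m + 1 := recFun_of_computable Primrec.succ.to_comp O
  have hF : RecFun O fun m => Nat.pair (chi A m.unpair.1) m.unpair.2 + 1 :=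
    hsucc.comp ((hA.comp h1).pair h2)
  refine (RecFun.natrec 0 hF).of_eq fun u => ?_
  induction u with
  | zero => rfl
  | succ u ih =>
    show Nat.pair (chi A (Nat.pair u _).unpair.1) (Nat.pair u _).unpair.2 + 1 = _
    rw [Nat.unpair_pair]
    show Nat.pair (chi A u) _ + 1 = _
    rw [ih]
    rfl

/-! ### The universal machine for the jump -/

/-- Plain part of the jump-decision procedure: `q = ⟨Atab, ⟨⟨e, x⟩, ⟨u, k⟩⟩⟩`. -/
noncomputable def jdec (q : ℕ) : Bool :=
  (Nat.Partrec.Code.evaln q.unpair.2.unpair.2.unpair.2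
    (Denumerable.ofNat Code
      (trN (Encodable.encode (dPn (Encodable.encode ((decN q.unpair.1).reverse))))
        q.unpair.2.unpair.1.unpair.1))
    q.unpair.2.unpair.1.unpair.2).isSome

theorem primrec_jdec : Primrec jdec := by
  have u1 : Primrec fun m : ℕ => m.unpair.1 := Primrec.fst.comp Primrec.unpair
  have u2 : Primrec fun m : ℕ => m.unpair.2 := Primrec.snd.comp Primrec.unpair
  have hk : Primrec fun q : ℕ => q.unpair.2.unpair.2.unpair.2 := u2.comp (u2.comp u2)
  have he : Primrec fun q : ℕ => q.unpair.2.unpair.1.unpair.1 := u1.comp (u1.comp u2)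
  have hx : Primrec fun q : ℕ => q.unpair.2.unpair.1.unpair.2 := u2.comp (u1.comp u2)
  have htab : Primrec fun q : ℕ => Encodable.encode ((decN q.unpair.1).reverse) :=
    Primrec.encode.comp (Primrec.list_reverse.comp (primrec_decN.comp u1))
  have hdPn : Primrec fun q : ℕ =>
      dPn (Encodable.encode ((decN q.unpair.1).reverse)) :=
    Nat.Partrec.Code.primrec₂_comp.comp (Primrec.const cStar)
      (Nat.Partrec.Code.primrec₂_pair.comp (Nat.Partrec.Code.primrec_const.comp htab)
        (Primrec.const Code.id))
  have htr : Primrec fun q : ℕ =>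
      trN (Encodable.encode (dPn (Encodable.encode ((decN q.unpair.1).reverse))))
        q.unpair.2.unpair.1.unpair.1 :=
    trN_primrec.comp (Primrec.encode.comp hdPn) he
  have hcode : Primrec fun q : ℕ => Denumerable.ofNat Code
      (trN (Encodable.encode (dPn (Encodable.encode ((decN q.unpair.1).reverse))))
        q.unpair.2.unpair.1.unpair.1) :=
    (Primrec.ofNat Code).comp htr
  have hev := Nat.Partrec.Code.primrec_evaln.comp ((hk.pair hcode).pair hx)
  exact Primrec.option_isSome.comp hev

theorem ofNat_trN (dc : Code) (e : ℕ) :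
    Denumerable.ofNat Code (trN (Encodable.encode dc) e) = TrO dc (ofNatO e) := by
  have h1 : Encodable.encode dc = encodeCode dc := congrFun Nat.Partrec.Code.encodeCode_eq dc
  have he := encode_ofNatO e
  rw [h1]
  conv_lhs => rw [← he]
  rw [trN_spec]
  have h2 : encodeCode (TrO dc (ofNatO e)) = Encodable.encode (TrO dc (ofNatO e)) :=
    (congrFun Nat.Partrec.Code.encodeCode_eq _).symm
  rw [h2, Denumerable.ofNat_encode]

/-- Search function whose zeroes witness membership in `jump A`. -/
noncomputable def fjump (A : Set ℕ) : ℕ → ℕ := fun m =>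
  cond (jdec (Nat.pair (atabF A m.unpair.2.unpair.1) m)) 0 1

theorem RecFun.fjump {O : ℕ → ℕ} {A : Set ℕ} (hA : RecFun O (chi A)) :
    RecFun O (fjump A) := by
  have hG : Computable fun q : ℕ => (cond (jdec q) 0 1 : ℕ) :=
    (Primrec.cond primrec_jdec (Primrec.const 0) (Primrec.const 1)).to_comp
  have hu : RecFun O fun m : ℕ => m.unpair.2.unpair.1 :=
    recFun_of_computable (((Primrec.fst.comp Primrec.unpair).comp
      (Primrec.snd.comp Primrec.unpair)).to_comp) O
  exact (recFun_of_computable hG O).comp (((hA.atab).comp hu).pair (RecFun.id O))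

theorem fjump_zero_iff {A : Set ℕ} (n w : ℕ) :
    fjump A (Nat.pair n w) = 0 ↔
      (Nat.Partrec.Code.evaln w.unpair.2
        (TrO (dPn (Encodable.encode (oTab (chi A) w.unpair.1))) (ofNatO n.unpair.1))
        n.unpair.2).isSome = true := by
  unfold fjump jdec
  rw [Nat.unpair_pair]
  simp only [Nat.unpair_pair]
  rw [decN_atabF, ofNat_trN]
  cases h : (Nat.Partrec.Code.evaln w.unpair.2
      (TrO (dPn (Encodable.encode (oTab (chi A) w.unpair.1))) (ofNatO n.unpair.1))
      n.unpair.2).isSome <;> simp [h]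

theorem exists_fjump_zero_iff {A : Set ℕ} (n : ℕ) :
    (∃ w, fjump A (Nat.pair n w) = 0) ↔ n ∈ jump A := by
  constructor
  · rintro ⟨w, hw⟩
    rw [fjump_zero_iff] at hw
    rw [mem_jump_iff]
    obtain ⟨v, hv⟩ := Option.isSome_iff_exists.1 hw
    have hv' := Nat.Partrec.Code.evaln_sound (by rw [hv]; exact Option.mem_def.2 rfl)
    have hd : ∀ m y, y ∈ eval (dPn (Encodable.encode (oTab (chi A) w.unpair.1))) m →
        y = chi A m := fun m y hy => (mem_eval_dPn_oTab.1 hy).2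
    exact Part.dom_iff_mem.2 ⟨v, TrO_sound hd _ _ _ hv'⟩
  · intro hn
    rw [mem_jump_iff] at hn
    obtain ⟨v, hv⟩ := Part.dom_iff_mem.1 hn
    obtain ⟨u, hu⟩ := use_principle _ _ _ hv
    obtain ⟨k, hk⟩ := Nat.Partrec.Code.evaln_complete.1 hu
    refine ⟨Nat.pair u k, ?_⟩
    rw [fjump_zero_iff, Nat.unpair_pair]
    exact Option.isSome_iff_exists.2 ⟨v, hk⟩

/-- The universal machine: relative to any oracle that computes `chi A`, the jump of `A`
is the domain of a single machine. -/
theorem jump_univ {A : Set ℕ} {O : ℕ → ℕ} (hA : RecFun O (chi A)) :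
    ∃ U : OCode, ∀ n, (evalo O U n).Dom ↔ n ∈ jump A := by
  obtain ⟨U, hU⟩ := (RecFun.fjump hA).rfind_dom'
  exact ⟨U, fun n => (hU n).trans (exists_fjump_zero_iff n)⟩

/-! ### Order facts about the jump and the join -/

theorem TuringLE.le_jump (A : Set ℕ) : TuringLE A (jump A) := by
  have hf : RecFun (chi A) fun m => 1 - chi A m.unpair.1 :=
    (recFun_of_computable (Primrec.nat_sub.comp (Primrec.const 1) Primrec.id).to_comp _).comp
      (RecFun.comp ((RecFun.oracle (chi A)))
        (recFun_of_computable ((Primrec.fst.comp Primrec.unpair).to_comp) _))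
  obtain ⟨c, hc⟩ := hf.rfind_dom'
  have key : ∀ m, chi A m = chi (jump A) (Nat.pair (encodeOCode c) m) := by
    intro m
    have h1 : (Nat.pair (encodeOCode c) m ∈ jump A) ↔ m ∈ A := by
      rw [pair_mem_jump_iff, hc]
      constructor
      · rintro ⟨w, hw⟩
        simp only [Nat.unpair_pair] at hw
        rcases chi_cases A m with h | h
        · rw [h] at hw
          omega
        · exact chi_eq_one_iff.1 h
      · intro hm
        exact ⟨0, by simp [Nat.unpair_pair, chi_eq_one_iff.2 hm]⟩
    by_cases hm : m ∈ A
    · rw [chi_eq_one_iff.2 hm, Eq.comm, chi_eq_one_iff]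
      exact h1.2 hm
    · have hm2 : Nat.pair (encodeOCode c) m ∉ jump A := fun hx => hm (h1.1 hx)
      simp [chi, hm, hm2]
    
  have : chi A = fun m => chi (jump A) (Nat.pair (encodeOCode c) m) := funext key
  rw [TuringLE, this]
  exact (RecFun.oracle _).comp
    (recFun_of_computable (Primrec₂.natPair.comp (Primrec.const (encodeOCode c)) Primrec.id).to_comp _)

theorem TuringLE.jump_mono {A W : Set ℕ} (h : TuringLE A W) :
    TuringLE (jump A) (jump W) := by
  obtain ⟨U, hU⟩ := jump_univ (O := chi W) h
  have key : ∀ n, chi (jump A) n = chi (jump W) (Nat.pair (encodeOCode U) n) := by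
    intro n
    have h1 : (Nat.pair (encodeOCode U) n ∈ jump W) ↔ n ∈ jump A := by
      rw [pair_mem_jump_iff]
      exact hU n
    by_cases hn : n ∈ jump A
    · rw [chi_eq_one_iff.2 hn, Eq.comm, chi_eq_one_iff]
      exact h1.2 hn
    · have hn2 : Nat.pair (encodeOCode U) n ∉ jump W := fun hx => hn (h1.1 hx)
      simp [chi, hn, hn2]
  have : chi (jump A) = fun n => chi (jump W) (Nat.pair (encodeOCode U) n) := funext key
  rw [TuringLE, this]
  exact (RecFun.oracle _).comp
    (recFun_of_computable (Primrec₂.natPair.comp (Primrec.const (encodeOCode U)) Primrec.id).to_comp _)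

theorem chi_join (A B : Set ℕ) (n : ℕ) :
    chi (join A B) n = if n % 2 = 0 then chi A (n / 2) else chi B (n / 2) := by
  have h2 : n % 2 = 0 ∨ n % 2 = 1 := by omega
  rcases h2 with h | h
  · by_cases hm : n / 2 ∈ A
    · simp [chi, join, h, hm]
    · simp [chi, join, h, hm]
  · by_cases hm : n / 2 ∈ B
    · simp [chi, join, h, hm]
    · simp [chi, join, h, hm]

theorem TuringLE.join_left (A B : Set ℕ) : TuringLE A (join A B) := by
  have key : chi A = fun n => chi (join A B) (2 * n) := by
    funext n
    rw [chi_join]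
    simp [Nat.mul_div_cancel_left n (by norm_num : 0 < 2), Nat.mul_mod_right]
  rw [TuringLE, key]
  exact (RecFun.oracle _).comp
    (recFun_of_computable (Primrec.nat_mul.comp (Primrec.const 2) Primrec.id).to_comp _)

theorem TuringLE.join_right (A B : Set ℕ) : TuringLE B (join A B) := by
  have key : chi B = fun n => chi (join A B) (2 * n + 1) := by
    funext n
    rw [chi_join]
    have h1 : (2 * n + 1) % 2 = 1 := by omega
    have h2 : (2 * n + 1) / 2 = n := by omega
    simp [h1, h2]
  rw [TuringLE, key]
  exact (RecFun.oracle _).comp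
    (recFun_of_computable (Primrec.nat_add.comp (Primrec.nat_mul.comp (Primrec.const 2) Primrec.id)
      (Primrec.const 1)).to_comp _)

theorem TuringLE.join_le {A B C : Set ℕ} (hA : TuringLE A C) (hB : TuringLE B C) :
    TuringLE (join A B) C := by
  have hG : Computable fun q : ℕ =>
      (if q.unpair.1 = 0 then q.unpair.2.unpair.1 else q.unpair.2.unpair.2 : ℕ) := by
    have u1 : Primrec fun m : ℕ => m.unpair.1 := Primrec.fst.comp Primrec.unpair
    have u2 : Primrec fun m : ℕ => m.unpair.2 := Primrec.snd.comp Primrec.unpair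
    exact (Primrec.ite (Primrec.eq.comp u1 (Primrec.const 0)) (u1.comp u2)
      (u2.comp u2)).to_comp
  have hmod : RecFun (chi C) fun n : ℕ => n % 2 :=
    recFun_of_computable ((Primrec.nat_mod.comp Primrec.id (Primrec.const 2)).to_comp) _
  have hdiv : RecFun (chi C) fun n : ℕ => n / 2 :=
    recFun_of_computable ((Primrec.nat_div.comp Primrec.id (Primrec.const 2)).to_comp) _
  have key : chi (join A B) = fun n =>
      (fun q : ℕ => if q.unpair.1 = 0 then q.unpair.2.unpair.1 else q.unpair.2.unpair.2)
        (Nat.pair (n % 2) (Nat.pair (chi A (n / 2)) (chi B (n / 2)))) := by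
    funext n
    simp only [Nat.unpair_pair]
    rw [chi_join]
  rw [TuringLE, key]
  exact (recFun_of_computable hG _).comp (hmod.pair ((hA.comp hdiv).pair (hB.comp hdiv)))


/-! ### The initial-segment tree of a set -/

/-- The characteristic path of a set. -/
noncomputable def pathOf (B : Set ℕ) : ℕ → Bool := fun i => decide (chi B i = 1)

theorem pathOf_iff {B : Set ℕ} {i : ℕ} : pathOf B i = true ↔ i ∈ B := by
  rw [pathOf, decide_eq_true_eq, chi_eq_one_iff]

/-- The tree of initial segments of `pathOf B`. -/
def segTree (B : Set ℕ) : Set (List Bool) :=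
  {σ | ∀ i, i < σ.length → σ.getD i false = pathOf B i}

/-- The initial segment of length `u`. -/
noncomputable def segL (B : Set ℕ) (u : ℕ) : List Bool := (List.range u).map (pathOf B)

theorem getD_map_range' {α : Type*} (d : α) {f : ℕ → α} {n i : ℕ} (h : i < n) :
    ((List.range n).map f).getD i d = f i := by
  have hlen : i < ((List.range n).map f).length := by simpa using h
  rw [List.getD_eq_getElem _ _ hlen]
  simp

theorem segL_mem (B : Set ℕ) (u : ℕ) : segL B u ∈ segTree B := by
  intro i hi
  have : i < u := by simpa [segL] using hi
  rw [segL, getD_map_range' _ this]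

theorem segL_length (B : Set ℕ) (u : ℕ) : (segL B u).length = u := by simp [segL]

theorem mem_segTree_iff {B : Set ℕ} {σ : List Bool} :
    σ ∈ segTree B ↔ σ = segL B σ.length := by
  constructor
  · intro h
    apply List.ext_getElem
    · simp [segL]
    · intro i h1 h2
      have h3 := h i h1
      rw [List.getD_eq_getElem _ _ h1] at h3
      rw [h3]
      have h4 : i < σ.length := h1
      rw [show (segL B σ.length)[i] = (segL B σ.length).getD i false from
        (List.getD_eq_getElem _ _ h2).symm, segL, getD_map_range' _ h4]
  · intro h
    rw [h]
    exact segL_mem B σ.length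

theorem segTree_isBinTree (B : Set ℕ) : IsBinTree (segTree B) := by
  intro s hs t ht i hi
  obtain ⟨r, rfl⟩ := ht
  rw [← hs i (by simp; omega), List.getD_append _ _ _ _ hi]

theorem segTree_infinite (B : Set ℕ) : (segTree B).Infinite := by
  have hinj : Function.Injective (segL B) := by
    intro a b hab
    have := congrArg List.length hab
    simpa [segL_length] using this
  exact Set.infinite_of_injective_forall_mem hinj (fun u => segL_mem B u)

/-- The coded tree of initial segments is computable from `B`. -/
theorem segTree_le (B : Set ℕ) : TuringLE (setOfStrings (segTree B)) B := by
  classical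
  -- the table of bits coincides numerically with `atabF B`
  have hatab : ∀ u, atabF B u = Encodable.encode (segL B u).reverse := by
    intro u
    induction u with
    | zero => simp [atabF, segL]
    | succ u ih =>
      have h1 : (segL B (u + 1)).reverse = pathOf B u :: (segL B u).reverse := by
        simp [segL, List.range_succ]
      rw [h1, Encodable.encode_list_cons]
      have h2 : atabF B (u + 1) = Nat.pair (chi B u) (atabF B u) + 1 := rfl
      have h3 : Encodable.encode (pathOf B u) = chi B u := by
        by_cases h : u ∈ B <;> simp [pathOf, chi, h]
      rw [h2, ih, h3]
  have key : ∀ n, chi (setOfStrings (segTree B)) n =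
      (fun q : ℕ => if (Encodable.encode (decL q.unpair.1) = q.unpair.1 ∧
          (decL q.unpair.1).reverse = decL q.unpair.2) then 1 else 0)
        (Nat.pair n (atabF B (decL n).length)) := by
    intro n
    simp only [Nat.unpair_pair]
    have hmem : n ∈ setOfStrings (segTree B) ↔
        (Encodable.encode (decL n) = n ∧ (decL n).reverse = decL (atabF B (decL n).length)) := by
      rw [hatab, decL_encode]
      constructor
      · rintro ⟨σ, hσ, rfl⟩
        rw [decL_encode]
        exact ⟨rfl, by rw [mem_segTree_iff] at hσ; rw [← hσ]⟩
      · rintro ⟨h1, h2⟩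
        refine ⟨decL n, ?_, h1⟩
        rw [mem_segTree_iff]
        have := congrArg List.reverse h2
        simpa using this
    by_cases h : n ∈ setOfStrings (segTree B)
    · rw [chi_eq_one_iff.2 h, if_pos (hmem.1 h)]
    · rw [if_neg (fun hc => h (hmem.2 hc))]
      simp [chi, h]
  have hG : Computable fun q : ℕ => (if (Encodable.encode (decL q.unpair.1) = q.unpair.1 ∧
      (decL q.unpair.1).reverse = decL q.unpair.2) then 1 else 0 : ℕ) := by
    have u1 : Primrec fun m : ℕ => m.unpair.1 := Primrec.fst.comp Primrec.unpair
    have u2 : Primrec fun m : ℕ => m.unpair.2 := Primrec.snd.comp Primrec.unpair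
    have hd1 : Primrec fun q : ℕ => decL q.unpair.1 := primrec_decL.comp u1
    have hc1 : PrimrecPred fun q : ℕ => Encodable.encode (decL q.unpair.1) = q.unpair.1 :=
      Primrec.eq.comp (Primrec.encode.comp hd1) u1
    have hc2 : PrimrecPred fun q : ℕ => (decL q.unpair.1).reverse = decL q.unpair.2 :=
      Primrec.eq.comp (Primrec.list_reverse.comp hd1) (primrec_decL.comp u2)
    exact (Primrec.ite (hc1.and hc2) (Primrec.const 1) (Primrec.const 0)).to_comp
  have hlen : RecFun (chi B) fun n : ℕ => atabF B (decL n).length := by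
    have h1 : Computable fun n : ℕ => (decL n).length :=
      (Primrec.list_length.comp primrec_decL).to_comp
    exact ((RecFun.oracle (chi B)).atab).comp (recFun_of_computable h1 _)
  have : chi (setOfStrings (segTree B)) = fun n =>
      (fun q : ℕ => if (Encodable.encode (decL q.unpair.1) = q.unpair.1 ∧
          (decL q.unpair.1).reverse = decL q.unpair.2) then 1 else 0)
        (Nat.pair n (atabF B (decL n).length)) := funext key
  rw [TuringLE, this]
  exact (recFun_of_computable hG _).comp ((RecFun.id _).pair hlen)

theorem path_of_segTree {B : Set ℕ} {f : ℕ → Bool} (h : IsPathOf f (segTree B)) :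
    toSet f = B := by
  have key : ∀ i, f i = pathOf B i := by
    intro i
    have h1 := h (i + 1) i
    have hlen : i < (List.ofFn fun j : Fin (i + 1) => f j).length := by simp
    have h2 := h1 (by simpa using hlen)
    rw [List.getD_eq_getElem _ _ hlen] at h2
    rw [← h2]
    simp only [List.getElem_ofFn]
  ext n
  rw [toSet, Set.mem_setOf_eq, key n, pathOf_iff]

theorem segTree_hasPath (B : Set ℕ) : IsPathOf (pathOf B) (segTree B) := by
  intro n i hi
  have hlen : i < (List.ofFn fun j : Fin n => pathOf B j).length := hi
  rw [List.getD_eq_getElem _ _ hlen]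
  simp only [List.getElem_ofFn]

/-- PA degrees lie above: if every `X`-computable infinite tree has a `C`-computable path,
then `X ≤_T C`. -/
theorem ll_implies_le {X C : Set ℕ} (h : ll X C) : TuringLE X C := by
  obtain ⟨f, hpath, hle⟩ := h (segTree X) (segTree_isBinTree X) (segTree_infinite X)
    (segTree_le X)
  have hfX : toSet f = X := path_of_segTree hpath
  rw [TuringLE, ← chi_congr hfX]
  exact hle

theorem ll_mono_right {A B B' : Set ℕ} (h : ll A B) (hBB' : TuringLE B B') : ll A B' := by
  intro T h1 h2 h3
  obtain ⟨f, hf1, hf2⟩ := h T h1 h2 h3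
  exact ⟨f, hf1, hf2.trans hBB'⟩


/-! ### The Friedberg forcing check -/

theorem chi_toSet (g : ℕ → Bool) (j : ℕ) : chi (toSet g) j = cond (g j) 1 0 := by
  cases h : g j <;> simp [chi, toSet, h]

theorem decide_chi_toSet (g : ℕ → Bool) (j : ℕ) : decide (chi (toSet g) j = 1) = g j := by
  cases h : g j <;> simp [chi_toSet, h]

theorem nat_find_eq {p q : ℕ → Prop} [DecidablePred p] [DecidablePred q]
    (hp : ∃ n, p n) (hq : ∃ n, q n) (h : ∀ n, p n ↔ q n) : Nat.find hp = Nat.find hq :=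
  le_antisymm (Nat.find_min' hp ((h _).2 (Nat.find_spec hq)))
    (Nat.find_min' hq ((h _).1 (Nat.find_spec hp)))

/-- The joined oracle table determined by an `A`-table and a finite binary string. -/
def jTabL (Atab : List ℕ) (τ : List Bool) : List ℕ :=
  (List.range (2 * τ.length)).map fun m =>
    if m % 2 = 0 then Atab.getD (m / 2) 0 else cond (τ.getD (m / 2) false) 1 0

theorem primrec_jTabL : Primrec₂ jTabL := by
  have hf : Primrec fun pr : List ℕ × List Bool => List.range (2 * pr.2.length) :=
    Primrec.list_range.comp
      (Primrec.nat_mul.comp (Primrec.const 2) (Primrec.list_length.comp Primrec.snd))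
  have hg : Primrec₂ fun (pr : List ℕ × List Bool) (m : ℕ) =>
      if m % 2 = 0 then pr.1.getD (m / 2) 0 else cond (pr.2.getD (m / 2) false) 1 0 := by
    have hm2 : Primrec fun q : (List ℕ × List Bool) × ℕ => q.2 % 2 :=
      Primrec.nat_mod.comp Primrec.snd (Primrec.const 2)
    have hd2 : Primrec fun q : (List ℕ × List Bool) × ℕ => q.2 / 2 :=
      Primrec.nat_div.comp Primrec.snd (Primrec.const 2)
    have hc : PrimrecPred fun q : (List ℕ × List Bool) × ℕ => q.2 % 2 = 0 :=
      Primrec.eq.comp hm2 (Primrec.const 0)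
    have h1 : Primrec fun q : (List ℕ × List Bool) × ℕ => q.1.1.getD (q.2 / 2) 0 :=
      (Primrec.list_getD 0).comp (Primrec.fst.comp Primrec.fst) hd2
    have h2 : Primrec fun q : (List ℕ × List Bool) × ℕ =>
        cond (q.1.2.getD (q.2 / 2) false) (1 : ℕ) 0 :=
      Primrec.cond ((Primrec.list_getD false).comp (Primrec.snd.comp Primrec.fst) hd2)
        (Primrec.const 1) (Primrec.const 0)
    exact (Primrec.ite hc h1 h2).to₂
  exact (Primrec.list_map hf hg).to₂

/-- The plain part of the forcing check: `q = ⟨⟨⟨e, ⟨σc, x⟩⟩, ⟨t, k⟩⟩, r⟩`. -/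
noncomputable def fdec (q : ℕ) : Bool :=
  (Nat.Partrec.Code.evaln q.unpair.1.unpair.2.unpair.2
    (Denumerable.ofNat Code
      (trN (Encodable.encode (dPn (Encodable.encode (jTabL (decN q.unpair.2).reverse
          (decL q.unpair.1.unpair.1.unpair.2.unpair.1 ++ decL q.unpair.1.unpair.2.unpair.1)))))
        q.unpair.1.unpair.1.unpair.1))
    q.unpair.1.unpair.1.unpair.2.unpair.2).isSome

theorem primrec_fdec : Primrec fdec := by
  have u1 : Primrec fun m : ℕ => m.unpair.1 := Primrec.fst.comp Primrec.unpair
  have u2 : Primrec fun m : ℕ => m.unpair.2 := Primrec.snd.comp Primrec.unpair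
  have hp : Primrec fun q : ℕ => q.unpair.1 := u1
  have hn : Primrec fun q : ℕ => q.unpair.1.unpair.1 := u1.comp u1
  have hw : Primrec fun q : ℕ => q.unpair.1.unpair.2 := u2.comp u1
  have hk : Primrec fun q : ℕ => q.unpair.1.unpair.2.unpair.2 := u2.comp hw
  have ht : Primrec fun q : ℕ => q.unpair.1.unpair.2.unpair.1 := u1.comp hw
  have he : Primrec fun q : ℕ => q.unpair.1.unpair.1.unpair.1 := u1.comp hn
  have hsc : Primrec fun q : ℕ => q.unpair.1.unpair.1.unpair.2.unpair.1 := u1.comp (u2.comp hn)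
  have hx : Primrec fun q : ℕ => q.unpair.1.unpair.1.unpair.2.unpair.2 := u2.comp (u2.comp hn)
  have htau : Primrec fun q : ℕ =>
      decL q.unpair.1.unpair.1.unpair.2.unpair.1 ++ decL q.unpair.1.unpair.2.unpair.1 :=
    Primrec.list_append.comp (primrec_decL.comp hsc) (primrec_decL.comp ht)
  have hAtab : Primrec fun q : ℕ => (decN q.unpair.2).reverse :=
    Primrec.list_reverse.comp (primrec_decN.comp u2)
  have hjt : Primrec fun q : ℕ => Encodable.encode (jTabL (decN q.unpair.2).reverse
      (decL q.unpair.1.unpair.1.unpair.2.unpair.1 ++ decL q.unpair.1.unpair.2.unpair.1)) :=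
    Primrec.encode.comp (primrec_jTabL.comp hAtab htau)
  have hdPn : Primrec fun q : ℕ => dPn (Encodable.encode (jTabL (decN q.unpair.2).reverse
      (decL q.unpair.1.unpair.1.unpair.2.unpair.1 ++ decL q.unpair.1.unpair.2.unpair.1))) :=
    Nat.Partrec.Code.primrec₂_comp.comp (Primrec.const cStar)
      (Nat.Partrec.Code.primrec₂_pair.comp (Nat.Partrec.Code.primrec_const.comp hjt)
        (Primrec.const Code.id))
  have htr := trN_primrec.comp (Primrec.encode.comp hdPn) he
  have hcode := (Primrec.ofNat Code).comp htr
  exact Primrec.option_isSome.comp (Nat.Partrec.Code.primrec_evaln.comp ((hk.pair hcode).pair hx))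

/-- The search function for forcing the jump of the join, relative to `A`. -/
noncomputable def ffind (A : Set ℕ) : ℕ → ℕ := fun p =>
  cond (fdec (Nat.pair p (atabF A ((decL p.unpair.1.unpair.2.unpair.1).length
    + (decL p.unpair.2.unpair.1).length)))) 0 1

theorem ffind_recFun {O : ℕ → ℕ} {A : Set ℕ} (hA : RecFun O (chi A)) :
    RecFun O (ffind A) := by
  have u1 : Primrec fun m : ℕ => m.unpair.1 := Primrec.fst.comp Primrec.unpair
  have u2 : Primrec fun m : ℕ => m.unpair.2 := Primrec.snd.comp Primrec.unpair
  have hG : Computable fun q : ℕ => (cond (fdec q) 0 1 : ℕ) :=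
    (Primrec.cond primrec_fdec (Primrec.const 0) (Primrec.const 1)).to_comp
  have hlen : Computable fun p : ℕ => (decL p.unpair.1.unpair.2.unpair.1).length
      + (decL p.unpair.2.unpair.1).length :=
    (Primrec.nat_add.comp
      (Primrec.list_length.comp (primrec_decL.comp (u1.comp (u2.comp u1))))
      (Primrec.list_length.comp (primrec_decL.comp (u1.comp u2)))).to_comp
  exact (recFun_of_computable hG O).comp
    ((RecFun.id O).pair ((hA.atab).comp (recFun_of_computable hlen O)))

/-- The real joined table for a string `τ`. -/
noncomputable def jTab (A : Set ℕ) (τ : List Bool) : List ℕ :=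
  jTabL (oTab (chi A) τ.length) τ

theorem ffind_zero_iff (A : Set ℕ) (n w : ℕ) :
    ffind A (Nat.pair n w) = 0 ↔
      (Nat.Partrec.Code.evaln w.unpair.2
        (TrO (dPn (Encodable.encode
          (jTab A (decL n.unpair.2.unpair.1 ++ decL w.unpair.1)))) (ofNatO n.unpair.1))
        n.unpair.2.unpair.2).isSome = true := by
  unfold ffind fdec
  simp only [Nat.unpair_pair]
  rw [decN_atabF, ofNat_trN]
  have hlen : (decL n.unpair.2.unpair.1).length + (decL w.unpair.1).length
      = (decL n.unpair.2.unpair.1 ++ decL w.unpair.1).length := by simp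
  rw [hlen]
  show cond (Option.isSome _) 0 1 = 0 ↔ _
  rw [show jTabL (oTab (chi A) (decL n.unpair.2.unpair.1 ++ decL w.unpair.1).length)
      (decL n.unpair.2.unpair.1 ++ decL w.unpair.1)
    = jTab A (decL n.unpair.2.unpair.1 ++ decL w.unpair.1) from rfl]
  cases h : (Nat.Partrec.Code.evaln w.unpair.2
      (TrO (dPn (Encodable.encode
        (jTab A (decL n.unpair.2.unpair.1 ++ decL w.unpair.1)))) (ofNatO n.unpair.1))
      n.unpair.2.unpair.2).isSome <;> simp [h]

theorem jTab_eq {A : Set ℕ} {g : ℕ → Bool} {τ : List Bool}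
    (hbits : ∀ i, i < τ.length → τ.getD i false = g i) :
    jTab A τ = oTab (chi (join A (toSet g))) (2 * τ.length) := by
  unfold jTab jTabL oTab
  apply List.map_congr_left
  intro m hm
  rw [List.mem_range] at hm
  have hm2 : m / 2 < τ.length := by omega
  by_cases h : m % 2 = 0
  · rw [if_pos h, chi_join, if_pos h, getD_map_range' _ hm2]
  · rw [if_neg h, chi_join, if_neg h, hbits _ hm2, chi_toSet]

/-- Forcing success: if the check succeeds on a string whose bits agree with `g`, the
oracle computation relative to `A ⊕ g` converges. -/
theorem force_of_ffind {A : Set ℕ} {g : ℕ → Bool} {n w : ℕ}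
    (hbits : ∀ i, i < (decL n.unpair.2.unpair.1 ++ decL w.unpair.1).length →
      (decL n.unpair.2.unpair.1 ++ decL w.unpair.1).getD i false = g i)
    (h : ffind A (Nat.pair n w) = 0) :
    (evalo (chi (join A (toSet g))) (ofNatO n.unpair.1) n.unpair.2.unpair.2).Dom := by
  rw [ffind_zero_iff] at h
  obtain ⟨v, hv⟩ := Option.isSome_iff_exists.1 h
  have hv' := Nat.Partrec.Code.evaln_sound (by rw [hv]; exact Option.mem_def.2 rfl)
  rw [jTab_eq hbits] at hv'
  have hd : ∀ m y, y ∈ eval (dPn (Encodable.encode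
      (oTab (chi (join A (toSet g))) (2 * (decL n.unpair.2.unpair.1 ++ decL w.unpair.1).length)))) m →
      y = chi (join A (toSet g)) m := fun m y hy => (mem_eval_dPn_oTab.1 hy).2
  exact Part.dom_iff_mem.2 ⟨v, TrO_sound hd _ _ _ hv'⟩

/-- Forcing completeness: if the oracle computation relative to `A ⊕ g` converges and `σ`
is a prefix of `g`, then some extension passes the check. -/
theorem ffind_of_force {A : Set ℕ} {g : ℕ → Bool} {σ : List Bool} {n : ℕ}
    (hσ : σ = (List.range σ.length).map g)
    (hn2 : n.unpair.2.unpair.1 = Encodable.encode σ)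
    (hdom : (evalo (chi (join A (toSet g))) (ofNatO n.unpair.1) n.unpair.2.unpair.2).Dom) :
    ∃ w, ffind A (Nat.pair n w) = 0 := by
  obtain ⟨v, hv⟩ := Part.dom_iff_mem.1 hdom
  obtain ⟨u, hu⟩ := use_principle _ _ _ hv
  set L := σ.length + u with hL
  set τ : List Bool := (List.range L).map g with hτ
  have hτlen : τ.length = L := by simp [hτ]
  have hsplit : σ ++ τ.drop σ.length = τ := by
    have h1 : τ.take σ.length = σ := by
      rw [hτ, hσ]
      simp only [List.length_map, List.length_range, ← List.map_take, List.take_range]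
      rw [Nat.min_eq_left (by omega)]
    conv_rhs => rw [← List.take_append_drop σ.length τ]
    rw [h1]
  have hmono := TrO_mono (dPn_oTab_mono (show u ≤ 2 * L by omega)) _ _ _ hu
  have hbits : ∀ i, i < τ.length → τ.getD i false = g i := by
    intro i hi
    rw [hτ, getD_map_range' _ (by rwa [hτlen] at hi)]
  have htab : oTab (chi (join A (toSet g))) (2 * L) = jTab A τ := by
    rw [jTab_eq hbits, hτlen]
  rw [htab] at hmono
  obtain ⟨k, hk⟩ := Nat.Partrec.Code.evaln_complete.1 hmono
  refine ⟨Nat.pair (Encodable.encode (τ.drop σ.length)) k, ?_⟩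
  rw [ffind_zero_iff]
  simp only [Nat.unpair_pair]
  rw [hn2, decL_encode, decL_encode, hsplit]
  exact Option.isSome_iff_exists.2 ⟨v, hk⟩


/-! ### The Friedberg construction -/

open Classical in
/-- One forcing step at stage `s` from the current string `σ`. -/
noncomputable def fstep (A : Set ℕ) (s : ℕ) (σ : List Bool) : List Bool :=
  if h : ∃ w, ffind A
      (Nat.pair (Nat.pair s.unpair.1 (Nat.pair (Encodable.encode σ) s.unpair.2)) w) = 0
  then σ ++ decL (Nat.find h).unpair.1
  else σ

/-- The stagewise construction: forcing plus coding one bit of `C`. -/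
noncomputable def sigma (A C : Set ℕ) : ℕ → List Bool := fun s =>
  Nat.rec [] (fun s prev => fstep A s prev ++ [decide (chi C s = 1)]) s

/-- The generic set produced by the construction. -/
noncomputable def gee (A C : Set ℕ) : ℕ → Bool := fun i => (sigma A C (i + 1)).getD i false

/-- The jump-inverting set. -/
noncomputable def Zed (A C : Set ℕ) : Set ℕ := join A (toSet (gee A C))

theorem sigma_succ (A C : Set ℕ) (s : ℕ) :
    sigma A C (s + 1) = fstep A s (sigma A C s) ++ [decide (chi C s = 1)] := rfl

theorem fstep_prefix (A : Set ℕ) (s : ℕ) (σ : List Bool) : σ <+: fstep A s σ := by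
  unfold fstep
  split
  · exact ⟨_, rfl⟩
  · exact List.prefix_refl σ

theorem sigma_prefix_succ (A C : Set ℕ) (s : ℕ) : sigma A C s <+: sigma A C (s + 1) := by
  rw [sigma_succ]
  exact (fstep_prefix A s _).trans ⟨_, rfl⟩

theorem sigma_prefix (A C : Set ℕ) {s s' : ℕ} (h : s ≤ s') : sigma A C s <+: sigma A C s' := by
  induction s' with
  | zero =>
    rw [Nat.le_zero.1 h]
  | succ m ihm =>
    by_cases h' : s = m + 1
    · rw [h']
    · have hm : s ≤ m := by omega
      exact (ihm hm).trans (sigma_prefix_succ A C m)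

theorem sigma_length (A C : Set ℕ) (s : ℕ) : s ≤ (sigma A C s).length := by
  induction s with
  | zero => simp
  | succ m ihm =>
    rw [sigma_succ]
    have h1 := (fstep_prefix A m (sigma A C m)).length_le
    simp only [List.length_append, List.length_cons, List.length_nil]
    omega

theorem gee_spec (A C : Set ℕ) (s i : ℕ) (hi : i < (sigma A C s).length) :
    (sigma A C s).getD i false = gee A C i := by
  unfold gee
  rcases le_total s (i + 1) with h | h
  · obtain ⟨r, hr⟩ := sigma_prefix A C h
    rw [← hr, List.getD_append _ _ _ _ hi]
  · obtain ⟨r, hr⟩ := sigma_prefix A C h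
    have hlen : i < (sigma A C (i + 1)).length := lt_of_lt_of_le (Nat.lt_succ_self i)
      (sigma_length A C (i + 1))
    rw [← hr, List.getD_append _ _ _ _ hlen]

theorem sigma_eq_map (A C : Set ℕ) (s : ℕ) :
    sigma A C s = (List.range (sigma A C s).length).map (gee A C) := by
  apply List.ext_getElem
  · simp
  · intro i h1 h2
    rw [show ((List.range (sigma A C s).length).map (gee A C))[i]
        = ((List.range (sigma A C s).length).map (gee A C)).getD i false from
      (List.getD_eq_getElem _ _ h2).symm, getD_map_range' _ (by simpa using h2),
      ← List.getD_eq_getElem _ _ h1, gee_spec A C s i h1]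

/-- The recorded bit: at stage `s + 1`, the bit of `g` at the end position codes `chi C s`. -/
theorem gee_codes (A C : Set ℕ) (s : ℕ) :
    gee A C (fstep A s (sigma A C s)).length = decide (chi C s = 1) := by
  have hlen : (fstep A s (sigma A C s)).length < (sigma A C (s + 1)).length := by
    rw [sigma_succ]
    simp
  rw [← gee_spec A C (s + 1) _ hlen, sigma_succ,
    List.getD_append_right _ _ _ _ (le_refl _)]
  simp

/-- The jump of `Zed A C` is decided by the forcing questions. -/
theorem jumpZ_iff (A C : Set ℕ) (n : ℕ) :
    n ∈ jump (Zed A C) ↔ ∃ w, ffind A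
      (Nat.pair (Nat.pair n.unpair.1
        (Nat.pair (Encodable.encode (sigma A C n)) n.unpair.2)) w) = 0 := by
  constructor
  · intro h
    rw [mem_jump_iff] at h
    have := ffind_of_force (A := A) (g := gee A C) (σ := sigma A C n)
      (n := Nat.pair n.unpair.1 (Nat.pair (Encodable.encode (sigma A C n)) n.unpair.2))
      (sigma_eq_map A C n) (by simp [Nat.unpair_pair]) ?_
    · exact this
    · simp only [Nat.unpair_pair]
      exact h
  · rintro ⟨w, hw⟩
    have hEx : ∃ w, ffind A (Nat.pair (Nat.pair n.unpair.1
        (Nat.pair (Encodable.encode (sigma A C n)) n.unpair.2)) w) = 0 := ⟨w, hw⟩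
    classical
    set w₀ := Nat.find hEx with hw₀
    have hff : ffind A (Nat.pair (Nat.pair n.unpair.1
        (Nat.pair (Encodable.encode (sigma A C n)) n.unpair.2)) w₀) = 0 := Nat.find_spec hEx
    -- the construction extends by the found witness at stage `n`
    have hτ : fstep A n (sigma A C n) = sigma A C n ++ decL w₀.unpair.1 := by
      rw [fstep, dif_pos hEx]
    have hbits : ∀ i, i < (decL (Nat.pair n.unpair.1
          (Nat.pair (Encodable.encode (sigma A C n)) n.unpair.2)).unpair.2.unpair.1
          ++ decL w₀.unpair.1).length →
        (decL (Nat.pair n.unpair.1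
          (Nat.pair (Encodable.encode (sigma A C n)) n.unpair.2)).unpair.2.unpair.1
          ++ decL w₀.unpair.1).getD i false = gee A C i := by
      simp only [Nat.unpair_pair, decL_encode]
      intro i hi
      have h1 : sigma A C n ++ decL w₀.unpair.1 <+: sigma A C (n + 1) := by
        rw [← hτ, sigma_succ]
        exact ⟨_, rfl⟩
      obtain ⟨r, hr⟩ := h1
      have hlen : i < (sigma A C (n + 1)).length := by
        rw [← hr]
        simp only [List.length_append] at hi ⊢
        omega
      rw [← gee_spec A C (n + 1) _ hlen, ← hr, List.getD_append _ _ _ _ hi]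
    have := force_of_ffind (A := A) (g := gee A C) hbits hff
    rw [mem_jump_iff]
    simpa only [Nat.unpair_pair, Zed] using this


/-! ### The two reductions -/

noncomputable def cFF (A : Set ℕ) : OCode :=
  ((ffind_recFun (RecFun.oracle (chi A))).rfind_dom').choose

theorem cFF_spec (A : Set ℕ) : ∀ n, (evalo (chi A) (cFF A) n).Dom ↔
    ∃ w, ffind A (Nat.pair n w) = 0 :=
  ((ffind_recFun (RecFun.oracle (chi A))).rfind_dom').choose_spec

/-- The forcing question, answered by `(jump A)`. -/
noncomputable def qq (A : Set ℕ) : ℕ → ℕ := fun n =>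
  chi (jump A) (Nat.pair (encodeOCode (cFF A)) n)

theorem qq_one_iff (A : Set ℕ) (n : ℕ) :
    qq A n = 1 ↔ ∃ w, ffind A (Nat.pair n w) = 0 := by
  rw [qq, chi_eq_one_iff, pair_mem_jump_iff, cFF_spec]

theorem qq_recFun {O : ℕ → ℕ} {A : Set ℕ} (h : RecFun O (chi (jump A))) :
    RecFun O (qq A) :=
  h.comp (recFun_of_computable
    (Primrec₂.natPair.comp (Primrec.const (encodeOCode (cFF A))) Primrec.id).to_comp O)

noncomputable def fTot (A : Set ℕ) : ℕ → ℕ := fun m =>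
  if qq A m.unpair.1 = 1 then ffind A m else 0

theorem fTot_total (A : Set ℕ) : ∀ n, ∃ w, fTot A (Nat.pair n w) = 0 := by
  intro n
  by_cases h : qq A n = 1
  · obtain ⟨w, hw⟩ := (qq_one_iff A n).1 h
    refine ⟨w, ?_⟩
    rw [fTot]
    simp only [Nat.unpair_pair]
    rw [if_pos h, hw]
  · refine ⟨0, ?_⟩
    rw [fTot]
    simp only [Nat.unpair_pair]
    rw [if_neg h]

/-- The found forcing witness. -/
noncomputable def FW (A : Set ℕ) : ℕ → ℕ := fun n => Nat.find (fTot_total A n)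

theorem FW_recFun {O : ℕ → ℕ} {A : Set ℕ} (h1 : RecFun O (chi (jump A)))
    (h2 : RecFun O (chi A)) : RecFun O (FW A) := by
  have hff := ffind_recFun h2
  have hq := qq_recFun h1
  have u1 : Primrec fun m : ℕ => m.unpair.1 := Primrec.fst.comp Primrec.unpair
  have u2 : Primrec fun m : ℕ => m.unpair.2 := Primrec.snd.comp Primrec.unpair
  have hG : Computable fun q : ℕ => (if q.unpair.1 = 1 then q.unpair.2 else 0 : ℕ) :=
    (Primrec.ite (Primrec.eq.comp u1 (Primrec.const 1)) u2 (Primrec.const 0)).to_comp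
  have htot : RecFun O (fTot A) := by
    refine ((recFun_of_computable hG O).comp
      ((hq.comp (recFun_of_computable u1.to_comp O)).pair hff)).of_eq fun m => ?_
    simp only [Nat.unpair_pair]
    rfl
  exact htot.findVal (fTot_total A)

theorem FW_eq_find {A : Set ℕ} {n : ℕ} (h : ∃ w, ffind A (Nat.pair n w) = 0) :
    FW A n = Nat.find h := by
  apply nat_find_eq
  intro w
  rw [fTot]
  simp only [Nat.unpair_pair]
  rw [if_pos ((qq_one_iff A n).2 h)]

/-- Plain assembly: the forcing part of a stage. `q = ⟨prev, ⟨qv, w⟩⟩`. -/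
def PLpre (q : ℕ) : ℕ :=
  if q.unpair.2.unpair.1 = 1
  then Encodable.encode (decL q.unpair.1 ++ decL q.unpair.2.unpair.2.unpair.1)
  else Encodable.encode (decL q.unpair.1)

/-- Plain assembly: appending the coded bit. `q = ⟨pre, bitval⟩`. -/
def PLapp (q : ℕ) : ℕ :=
  Encodable.encode (decL q.unpair.1 ++ [decide (q.unpair.2 = 1)])

theorem computable_PLpre : Computable PLpre := by
  have u1 : Primrec fun m : ℕ => m.unpair.1 := Primrec.fst.comp Primrec.unpair
  have u2 : Primrec fun m : ℕ => m.unpair.2 := Primrec.snd.comp Primrec.unpair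
  exact (Primrec.ite (Primrec.eq.comp (u1.comp u2) (Primrec.const 1))
    (Primrec.encode.comp (Primrec.list_append.comp (primrec_decL.comp u1)
      (primrec_decL.comp (u1.comp (u2.comp u2)))))
    (Primrec.encode.comp (primrec_decL.comp u1))).to_comp

theorem computable_PLapp : Computable PLapp := by
  have u1 : Primrec fun m : ℕ => m.unpair.1 := Primrec.fst.comp Primrec.unpair
  have u2 : Primrec fun m : ℕ => m.unpair.2 := Primrec.snd.comp Primrec.unpair
  exact (Primrec.encode.comp (Primrec.list_append.comp (primrec_decL.comp u1)
    (Primrec.list_cons.comp (Primrec.eq.comp u2 (Primrec.const 1)).decide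
      (Primrec.const [])))).to_comp

/-- Question number at a stage: `m = ⟨s, prev⟩ ↦ ⟨e, ⟨prev, x⟩⟩`. -/
def nOf (m : ℕ) : ℕ :=
  Nat.pair m.unpair.1.unpair.1 (Nat.pair m.unpair.2 m.unpair.1.unpair.2)

theorem computable_nOf : Computable nOf := by
  have u1 : Primrec fun m : ℕ => m.unpair.1 := Primrec.fst.comp Primrec.unpair
  have u2 : Primrec fun m : ℕ => m.unpair.2 := Primrec.snd.comp Primrec.unpair
  exact (Primrec₂.natPair.comp (u1.comp u1) (Primrec₂.natPair.comp u2 (u2.comp u1))).to_comp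

/-- The forcing part of the machine step. -/
noncomputable def PRE (A : Set ℕ) : ℕ → ℕ := fun m =>
  PLpre (Nat.pair m.unpair.2 (Nat.pair (qq A (nOf m)) (FW A (nOf m))))

theorem PRE_recFun {O : ℕ → ℕ} {A : Set ℕ} (h1 : RecFun O (chi (jump A)))
    (h2 : RecFun O (chi A)) : RecFun O (PRE A) := by
  have u2 : Primrec fun m : ℕ => m.unpair.2 := Primrec.snd.comp Primrec.unpair
  have hn := recFun_of_computable computable_nOf O
  exact (recFun_of_computable computable_PLpre O).comp
    ((recFun_of_computable u2.to_comp O).pair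
      (((qq_recFun h1).comp hn).pair ((FW_recFun h1 h2).comp hn)))

/-- The forcing part of the step computes `fstep`. -/
theorem PRE_spec (A C : Set ℕ) (s : ℕ) :
    PRE A (Nat.pair s (Encodable.encode (sigma A C s)))
      = Encodable.encode (fstep A s (sigma A C s)) := by
  have hn : nOf (Nat.pair s (Encodable.encode (sigma A C s)))
      = Nat.pair s.unpair.1 (Nat.pair (Encodable.encode (sigma A C s)) s.unpair.2) := by
    unfold nOf
    simp only [Nat.unpair_pair]
  rw [PRE, hn]
  simp only [Nat.unpair_pair]
  by_cases hEx : ∃ w, ffind A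
      (Nat.pair (Nat.pair s.unpair.1 (Nat.pair (Encodable.encode (sigma A C s)) s.unpair.2)) w)
        = 0
  · rw [FW_eq_find hEx]
    unfold PLpre
    simp only [Nat.unpair_pair]
    rw [if_pos ((qq_one_iff A _).2 hEx), decL_encode]
    rw [fstep, dif_pos hEx]
  · have hq : qq A (Nat.pair s.unpair.1
        (Nat.pair (Encodable.encode (sigma A C s)) s.unpair.2)) ≠ 1 :=
      fun hq1 => hEx ((qq_one_iff A _).1 hq1)
    unfold PLpre
    simp only [Nat.unpair_pair]
    rw [if_neg hq, decL_encode]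
    rw [fstep, dif_neg hEx]

/-- The machine step relative to `C`. -/
noncomputable def stepC (A C : Set ℕ) : ℕ → ℕ := fun m =>
  PLapp (Nat.pair (PRE A m) (chi C m.unpair.1))

theorem stepC_spec (A C : Set ℕ) (s : ℕ) :
    stepC A C (Nat.pair s (Encodable.encode (sigma A C s)))
      = Encodable.encode (sigma A C (s + 1)) := by
  rw [stepC, PRE_spec]
  unfold PLapp
  simp only [Nat.unpair_pair]
  rw [decL_encode, sigma_succ]

theorem sigmaEnc_recFun_C {A C : Set ℕ} (hJA : TuringLE (jump A) C) :
    RecFun (chi C) (fun s => Encodable.encode (sigma A C s)) := by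
  have hA : RecFun (chi C) (chi A) := (TuringLE.le_jump A).trans hJA
  have u1 : Primrec fun m : ℕ => m.unpair.1 := Primrec.fst.comp Primrec.unpair
  have hstep : RecFun (chi C) (stepC A C) :=
    (recFun_of_computable computable_PLapp _).comp
      ((PRE_recFun hJA hA).pair ((RecFun.oracle (chi C)).comp
        (recFun_of_computable u1.to_comp _)))
  refine (RecFun.natrec 0 hstep).of_eq fun s => ?_
  induction s with
  | zero => simp [sigma]
  | succ m ih =>
    have hrec : (Nat.rec 0 (fun s prev => stepC A C (Nat.pair s prev)) (m + 1) : ℕ)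
        = stepC A C (Nat.pair m (Nat.rec 0 (fun s prev => stepC A C (Nat.pair s prev)) m)) :=
      rfl
    rw [hrec, ih, stepC_spec]

/-- First reduction: the jump of `Zed A C` is computable from `C`. -/
theorem jumpZ_le {A C : Set ℕ} (hJA : TuringLE (jump A) C) :
    TuringLE (jump (Zed A C)) C := by
  have key : ∀ n, chi (jump (Zed A C)) n
      = qq A (nOf (Nat.pair n (Encodable.encode (sigma A C n)))) := by
    intro n
    have hn : nOf (Nat.pair n (Encodable.encode (sigma A C n)))
        = Nat.pair n.unpair.1 (Nat.pair (Encodable.encode (sigma A C n)) n.unpair.2) := by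
      unfold nOf
      simp only [Nat.unpair_pair]
    rw [hn]
    by_cases h : n ∈ jump (Zed A C)
    · rw [chi_eq_one_iff.2 h]
      exact ((qq_one_iff A _).2 ((jumpZ_iff A C n).1 h)).symm
    · have h2 : qq A (Nat.pair n.unpair.1
          (Nat.pair (Encodable.encode (sigma A C n)) n.unpair.2)) ≠ 1 :=
        fun hq => h ((jumpZ_iff A C n).2 ((qq_one_iff A _).1 hq))
      have hq0 : qq A (Nat.pair n.unpair.1
          (Nat.pair (Encodable.encode (sigma A C n)) n.unpair.2)) = 0 := by
        rcases chi_cases (jump A) (Nat.pair (encodeOCode (cFF A))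
          (Nat.pair n.unpair.1 (Nat.pair (Encodable.encode (sigma A C n)) n.unpair.2)))
          with h0 | h0
        · exact h0
        · exact absurd h0 h2
      rw [hq0]
      simp [chi, h]
  have hA : RecFun (chi C) (chi A) := (TuringLE.le_jump A).trans hJA
  have heq : chi (jump (Zed A C)) = fun n =>
      qq A (nOf (Nat.pair n (Encodable.encode (sigma A C n)))) := funext key
  rw [TuringLE, heq]
  exact ((qq_recFun hJA).comp ((recFun_of_computable computable_nOf _).comp
    ((RecFun.id _).pair (sigmaEnc_recFun_C hJA))))

/-- The machine step relative to `jump (Zed A C)` (reading the coded bit from `g`). -/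
noncomputable def stepZ (A C : Set ℕ) : ℕ → ℕ := fun m =>
  PLapp (Nat.pair (PRE A m) (chi (toSet (gee A C)) ((decL (PRE A m)).length)))

theorem stepZ_spec (A C : Set ℕ) (s : ℕ) :
    stepZ A C (Nat.pair s (Encodable.encode (sigma A C s)))
      = Encodable.encode (sigma A C (s + 1)) := by
  rw [stepZ, PRE_spec]
  unfold PLapp
  simp only [Nat.unpair_pair]
  rw [decL_encode, decide_chi_toSet, gee_codes, sigma_succ]

theorem sigmaEnc_recFun_Z (A C : Set ℕ) :
    RecFun (chi (jump (Zed A C))) (fun s => Encodable.encode (sigma A C s)) := by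
  have hZA : TuringLE A (Zed A C) := TuringLE.join_left A _
  have hA' : RecFun (chi (jump (Zed A C))) (chi A) :=
    hZA.trans (TuringLE.le_jump (Zed A C))
  have hJA' : RecFun (chi (jump (Zed A C))) (chi (jump A)) := TuringLE.jump_mono hZA
  have hg' : RecFun (chi (jump (Zed A C))) (chi (toSet (gee A C))) :=
    (TuringLE.join_right A _).trans (TuringLE.le_jump (Zed A C))
  have hlen : Computable fun p : ℕ => (decL p).length :=
    (Primrec.list_length.comp primrec_decL).to_comp
  have hPRE := PRE_recFun hJA' hA'
  have hstep : RecFun (chi (jump (Zed A C))) (stepZ A C) :=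
    (recFun_of_computable computable_PLapp _).comp
      (hPRE.pair (hg'.comp ((recFun_of_computable hlen _).comp hPRE)))
  refine (RecFun.natrec 0 hstep).of_eq fun s => ?_
  induction s with
  | zero => simp [sigma]
  | succ m ih =>
    have hrec : (Nat.rec 0 (fun s prev => stepZ A C (Nat.pair s prev)) (m + 1) : ℕ)
        = stepZ A C (Nat.pair m (Nat.rec 0 (fun s prev => stepZ A C (Nat.pair s prev)) m)) :=
      rfl
    rw [hrec, ih, stepZ_spec]

/-- Second reduction: `C` is computable from the jump of `Zed A C`. -/
theorem C_le_jumpZ (A C : Set ℕ) : TuringLE C (jump (Zed A C)) := by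
  have hg' : RecFun (chi (jump (Zed A C))) (chi (toSet (gee A C))) :=
    (TuringLE.join_right A _).trans (TuringLE.le_jump (Zed A C))
  have key : ∀ s, chi C s
      = chi (toSet (gee A C)) ((decL (Encodable.encode (sigma A C (s + 1)))).length - 1) := by
    intro s
    rw [decL_encode, sigma_succ]
    have hlen : (fstep A s (sigma A C s) ++ [decide (chi C s = 1)]).length - 1
        = (fstep A s (sigma A C s)).length := by simp
    rw [hlen, chi_toSet, gee_codes]
    rcases chi_cases C s with h | h
    · rw [h]; simp
    · rw [h]; simp
  have hlen : Computable fun p : ℕ => (decL p).length - 1 :=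
    (Primrec.nat_sub.comp (Primrec.list_length.comp primrec_decL) (Primrec.const 1)).to_comp
  have hsucc : Computable fun s : ℕ => s + 1 := Primrec.succ.to_comp
  have heq : chi C = fun s =>
      chi (toSet (gee A C)) ((decL (Encodable.encode (sigma A C (s + 1)))).length - 1) :=
    funext key
  rw [TuringLE, heq]
  exact hg'.comp ((recFun_of_computable hlen _).comp
    ((sigmaEnc_recFun_Z A C).comp (recFun_of_computable hsucc _)))

/-- **Friedberg jump inversion** (relative form): if `jump A ≤_T C` then some `Z` has
`jump Z ≡_T C`. -/
theorem friedberg {A C : Set ℕ} (hJA : TuringLE (jump A) C) :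
    ∃ Z : Set ℕ, TuringLE (jump Z) C ∧ TuringLE C (jump Z) :=
  ⟨Zed A C, jumpZ_le hJA, C_le_jumpZ A C⟩

-- ===================== AUX END =====================

/-- `θ` is an arithmetical predicate of two sets: membership is uniformly decided by
some fixed bit of a finite iterate of the jump of the join. -/
def Arithmetical (θ : Set ℕ → Set ℕ → Prop) : Prop :=
  ∃ n e : ℕ, ∀ X Y : Set ℕ, θ X Y ↔ e ∈ jumpIter n (join X Y)

/-- **Reformulation of the `≪²`-basis theorem via jump inversion** (prop:rephrase,
standard-model content). For arithmetical `θ`, the `≪²`-basis theorem for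
`∀X ∃Y θ(X,Y)` is equivalent to: for all `A, C` with `A' ≪ C` there is `B` with
`θ(A,B)` and `(A ⊕ B)' ≪ C`. -/
theorem rephrase_ll2_basis (θ : Set ℕ → Set ℕ → Prop) (hθ : Arithmetical θ) :
    (∀ X Z : Set ℕ, ll (jump X) (jump Z) →
        ∃ Y : Set ℕ, TuringLE Y (jump Z) ∧ θ X Y ∧ ll (jump (join X Y)) (jump Z)) ↔
    (∀ A C : Set ℕ, ll (jump A) C →
        ∃ B : Set ℕ, θ A B ∧ ll (jump (join A B)) C) := by
  constructor
  · -- (i) ⇒ (ii), via Friedberg jump inversion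
    intro H A C hll
    have hJA : TuringLE (jump A) C := ll_implies_le hll
    obtain ⟨Z, h1, h2⟩ := friedberg hJA
    have hll2 : ll (jump A) (jump Z) := ll_mono_right hll h2
    obtain ⟨Y, hY1, hY2, hY3⟩ := H A Z hll2
    exact ⟨Y, hY2, ll_mono_right hY3 h1⟩
  · -- (ii) ⇒ (i)
    intro H X Z hll
    obtain ⟨B, hB1, hB2⟩ := H X (jump Z) hll
    refine ⟨B, ?_, hB1, hB2⟩
    exact ((TuringLE.join_right X B).trans (TuringLE.le_jump _)).trans (ll_implies_le hB2)

end ArxivLL
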